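/- arXiv:1611.10308 — 13 statements merged into one kernel-verified Lean document; each statement's English description precedes it below -/
import Mathlib

section
/- Let D be a principal ideal domain with quotient field K, and let B be an n×n matrix over D with minimal polynomial μ_B over K. Then μ_B has coefficients in D, and the set N(B) = {f ∈ D[X] : f(B) = 0} equals the principal ideal μ_B·D[X]. -/
open Polynomial Matrix

lemma aeval_matrix_map {D K : Type*} [CommRing D] [CommRing K] (φ : D →+* K) {n : ℕ}
    (B : Matrix (Fin n) (Fin n) D) (g : Polynomial D) :
    Polynomial.aeval (B.map φ) (g.map φ) = (Polynomial.aeval B g).map φ := by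
  rw [aeval_def, eval₂_map, aeval_def, ← RingHom.mapMatrix_apply, ← RingHom.mapMatrix_apply,
    hom_eval₂]
  congr 1
  ext d
  simp [Matrix.algebraMap_eq_diagonal, Matrix.diagonal_map, Matrix.diagonal_apply, apply_ite φ]

set_option maxHeartbeats 1000000 in
theorem stmt0 (D : Type*) [CommRing D] [IsDomain D] [IsPrincipalIdealRing D]
    (n : ℕ) (hn : 0 < n) (B : Matrix (Fin n) (Fin n) D) :
    ∃ μD : Polynomial D,
      μD.map (algebraMap D (FractionRing D)) =
        minpoly (FractionRing D) (B.map (algebraMap D (FractionRing D))) ∧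
      ∀ f : Polynomial D, Polynomial.aeval B f = 0 ↔ μD ∣ f := by
  set K := FractionRing D
  set φ := algebraMap D K
  have hφ : Function.Injective φ := IsFractionRing.injective D K
  set BK := B.map φ with hBK
  set m := minpoly K BK with hm
  have hint : IsIntegral K BK := ⟨BK.charpoly, BK.charpoly_monic, BK.aeval_self_charpoly⟩
  have hmm : m.Monic := minpoly.monic hint
  have hdvd : m ∣ B.charpoly.map φ := by
    rw [← Matrix.charpoly_map]
    exact minpoly.dvd K BK BK.aeval_self_charpoly
  obtain ⟨μD, hμD⟩ := IsIntegrallyClosed.eq_map_mul_C_of_dvd (K := K) B.charpoly_monic hdvd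
  rw [hmm.leadingCoeff, Polynomial.C_1, mul_one] at hμD
  have hμmonic : μD.Monic := Polynomial.monic_of_injective hφ (hμD ▸ hmm)
  refine ⟨μD, hμD, fun f => ?_⟩
  have h1 : Polynomial.aeval B f = 0 ↔ Polynomial.aeval BK (f.map φ) = 0 := by
    rw [aeval_matrix_map]
    constructor
    · intro h; rw [h]; ext i j; simp
    · intro h
      ext i j
      apply hφ
      have := congrFun (congrFun h i) j
      simpa using this
  rw [h1, ← Polynomial.map_dvd_map φ hφ hμmonic, hμD]
  constructor
  · exact fun h => minpoly.dvd K BK h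
  · rintro ⟨q, hq⟩
    rw [hq, _root_.map_mul, minpoly.aeval, zero_mul]
end

section
/- Let R be a commutative ring with unity and C ∈ M_n(R). Then a polynomial f ∈ R[X] satisfies f(C) = 0 if and only if there exists Q ∈ M_n(R[X]) such that adj(X·I − C)·f(X) = Q(X)·χ_C(X), where adj denotes the adjugate matrix and χ_C the characteristic polynomial of C. -/
open Polynomial Matrix

/-- Noncommutative factor theorem: if `a` commutes with all coefficients of `p`
and `p.eval a = 0`, then `X - C a` left-divides `p`. Stated via `p - C (p.eval a)`. -/
lemma aux_dvd_sub_C_eval {S : Type*} [Ring S] (a : S) (p : S[X])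
    (hp : ∀ i, Commute a (p.coeff i)) : (X - C a) ∣ p - C (p.eval a) := by
  have e1 : C (p.eval a) = ∑ i ∈ Finset.range (p.natDegree + 1), C (p.coeff i) * (C a) ^ i := by
    rw [eval_eq_sum_range, map_sum]
    exact Finset.sum_congr rfl fun i _ => by rw [C_mul, map_pow]
  have key : p - C (p.eval a) = ∑ i ∈ Finset.range (p.natDegree + 1),
      (C (p.coeff i) * X ^ i - C (p.coeff i) * (C a) ^ i) := by
    rw [Finset.sum_sub_distrib, ← e1]
    congr 1
    exact p.as_sum_range_C_mul_X_pow
  rw [key]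
  apply Finset.dvd_sum
  intro i _
  obtain ⟨g, hg⟩ := (Polynomial.commute_X (C a)).sub_dvd_pow_sub_pow i
  have hcomm : Commute (C (p.coeff i)) (X - C a) :=
    ((Polynomial.commute_X (C (p.coeff i))).symm).sub_right
      (((hp i).map (C : S →+* S[X])).symm)
  refine ⟨C (p.coeff i) * g, ?_⟩
  rw [← mul_sub, hg, ← mul_assoc, hcomm.eq, mul_assoc]

theorem stmt1 (R : Type*) [CommRing R] (n : ℕ) (M : Matrix (Fin n) (Fin n) R)
    (f : Polynomial R) :
    Polynomial.aeval M f = 0 ↔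
      ∃ Q : Matrix (Fin n) (Fin n) (Polynomial R),
        f • (Matrix.charmatrix M).adjugate = M.charpoly • Q := by
  constructor
  · intro hf
    -- `X - C M` divides `f.map (algebraMap ...)` in `(Matrix n n R)[X]`
    set g : Polynomial (Matrix (Fin n) (Fin n) R) :=
      f.map (algebraMap R (Matrix (Fin n) (Fin n) R)) with hg
    have hev : g.eval M = 0 := by
      rw [hg, eval_map, ← aeval_def, hf]
    have hdvd : (X - C M) ∣ g := by
      have := aux_dvd_sub_C_eval M g (fun i => by
        rw [hg, coeff_map]
        exact (Algebra.commutes (f.coeff i) M).symm)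
      rwa [hev, map_zero, sub_zero] at this
    obtain ⟨q, hq⟩ := hdvd
    refine ⟨matPolyEquiv.symm q, ?_⟩
    have key : f • (1 : Matrix (Fin n) (Fin n) R[X]) =
        charmatrix M * matPolyEquiv.symm q := by
      apply matPolyEquiv.injective
      rw [_root_.map_mul, matPolyEquiv_charmatrix, matPolyEquiv_smul_one,
        AlgEquiv.apply_symm_apply, ← hg, hq]
    calc f • (charmatrix M).adjugate
        = (charmatrix M).adjugate * (f • (1 : Matrix (Fin n) (Fin n) R[X])) := by
          rw [mul_smul_comm, mul_one]
      _ = (charmatrix M).adjugate * (charmatrix M * matPolyEquiv.symm q) := by rw [key]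
      _ = M.charpoly • matPolyEquiv.symm q := by
          rw [← mul_assoc, adjugate_mul, smul_mul_assoc, one_mul, ← Matrix.charpoly]
  · rintro ⟨Q, hQ⟩
    -- multiply on the right by the charmatrix and cancel the monic charpoly
    have h1 : M.charpoly • (f • (1 : Matrix (Fin n) (Fin n) R[X])) =
        M.charpoly • (Q * charmatrix M) := by
      calc M.charpoly • (f • (1 : Matrix (Fin n) (Fin n) R[X]))
          = f • (M.charpoly • (1 : Matrix (Fin n) (Fin n) R[X])) := smul_comm _ _ _
        _ = f • ((charmatrix M).adjugate * charmatrix M) := by rw [adjugate_mul, Matrix.charpoly]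
        _ = (f • (charmatrix M).adjugate) * charmatrix M := by rw [smul_mul_assoc]
        _ = (M.charpoly • Q) * charmatrix M := by rw [hQ]
        _ = M.charpoly • (Q * charmatrix M) := by rw [smul_mul_assoc]
    have h2 : f • (1 : Matrix (Fin n) (Fin n) R[X]) = Q * charmatrix M := by
      apply Matrix.ext
      intro i j
      have h := congrFun (congrFun h1 i) j
      simp only [Matrix.smul_apply, smul_eq_mul] at h
      exact M.charpoly_monic.isRegular.left h
    have h3 : f.map (algebraMap R (Matrix (Fin n) (Fin n) R)) =
        matPolyEquiv Q * (X - C M) := by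
      have := congrArg matPolyEquiv h2
      rwa [matPolyEquiv_smul_one, _root_.map_mul, matPolyEquiv_charmatrix] at this
    have := congrArg (Polynomial.eval M) h3
    rwa [eval_mul_X_sub_C, eval_map, ← aeval_def] at this
end

section
/- Let D be a principal ideal domain, p ∈ D prime, B ∈ M_n(D), and t ≥ 1. Then N_{(p^t)}(B) ∩ p·D[X] = p·N_{(p^{t-1})}(B). -/
open Polynomial Matrix

theorem stmt5 (D : Type*) [CommRing D] [IsDomain D] [IsPrincipalIdealRing D]
    (n : ℕ) (p : D) (hp : Prime p) (B : Matrix (Fin n) (Fin n) D)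
    (t : ℕ) (ht : 1 ≤ t) (f : Polynomial D) :
    ((∀ i j, p ^ t ∣ Polynomial.aeval B f i j) ∧ ∀ k, p ∣ f.coeff k) ↔
      ∃ g : Polynomial D, (∀ i j, p ^ (t - 1) ∣ Polynomial.aeval B g i j) ∧
        f = Polynomial.C p * g := by
  have hpt : p ^ t = p * p ^ (t - 1) := by
    conv_lhs => rw [show t = 1 + (t - 1) by omega]
    rw [pow_add, pow_one]
  have key : ∀ g : Polynomial D, ∀ i j,
      Polynomial.aeval B (Polynomial.C p * g) i j = p * Polynomial.aeval B g i j := by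
    intro g i j
    rw [_root_.map_mul, aeval_C]
    simp [Algebra.algebraMap_eq_smul_one, Matrix.smul_mul, Matrix.smul_apply]
  constructor
  · rintro ⟨h1, h2⟩
    obtain ⟨g, hg⟩ := (Polynomial.C_dvd_iff_dvd_coeff p f).mpr h2
    refine ⟨g, fun i j => ?_, hg⟩
    have := h1 i j
    rw [hg, key, hpt] at this
    exact (mul_dvd_mul_iff_left hp.ne_zero).mp this
  · rintro ⟨g, hg, rfl⟩
    constructor
    · intro i j
      rw [key, hpt]
      exact mul_dvd_mul_left p (hg i j)
    · intro k
      rw [mul_comm, Polynomial.coeff_mul_C]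
      exact Dvd.intro_left _ rfl
end

section
/- Let D be a principal ideal domain, p ∈ D prime, B ∈ M_n(D), t ≥ 1, and ν ∈ D[X] a monic polynomial. If N_{(p^t)}(B) = (ν) + p·N_{(p^{t-1})}(B), then ν is a (p^t)-minimal polynomial of B, i.e., every monic polynomial f ∈ N_{(p^t)}(B) satisfies deg(f) ≥ deg(ν). -/
open Polynomial Matrix

theorem stmt6 (D : Type*) [CommRing D] [IsDomain D] [IsPrincipalIdealRing D]
    (n : ℕ) (p : D) (hp : Prime p) (B : Matrix (Fin n) (Fin n) D)
    (t : ℕ) (ht : 1 ≤ t) (ν : Polynomial D) (hν : ν.Monic)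
    (hgen : ∀ f : Polynomial D, (∀ i j, p ^ t ∣ Polynomial.aeval B f i j) ↔
      ∃ g h : Polynomial D, (∀ i j, p ^ (t - 1) ∣ Polynomial.aeval B h i j) ∧
        f = g * ν + Polynomial.C p * h) :
    ∀ f : Polynomial D, f.Monic → (∀ i j, p ^ t ∣ Polynomial.aeval B f i j) →
      ν.natDegree ≤ f.natDegree := by
  intro f hf hfN
  obtain ⟨g, h, hh, hfeq⟩ := (hgen f).mp hfN
  have hprime : (Ideal.span {p}).IsPrime :=
    (Ideal.span_singleton_prime hp.ne_zero).mpr hp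
  haveI := hprime
  haveI : IsDomain (D ⧸ Ideal.span {p}) := Ideal.Quotient.isDomain _
  set q := Ideal.Quotient.mk (Ideal.span {p}) with hq
  have hqp : q p = 0 := Ideal.Quotient.eq_zero_iff_mem.mpr
    (Ideal.mem_span_singleton_self p)
  have hmapf : (f.map q).Monic := hf.map q
  have hmapν : (ν.map q).Monic := hν.map q
  have heq : f.map q = g.map q * ν.map q := by
    rw [hfeq]
    simp [Polynomial.map_add, Polynomial.map_mul, Polynomial.map_C, hqp]
  have hg0 : g.map q ≠ 0 := by
    intro h0
    rw [h0, zero_mul] at heq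
    exact hmapf.ne_zero heq
  calc ν.natDegree = (ν.map q).natDegree := (hν.natDegree_map q).symm
    _ ≤ (f.map q).natDegree := by
        rw [heq, Polynomial.natDegree_mul hg0 hmapν.ne_zero]
        exact Nat.le_add_left _ _
    _ = f.natDegree := hf.natDegree_map q
end

section
/- Let D be a principal ideal domain, p ∈ D prime, t ≥ 1, B ∈ M_n(D), ν_{t-1} a (p^{t-1})-minimal polynomial of B, and f ∈ N_{(p^t)}(B) with f ∉ p·D[X]. Write f = f₁ + p·f₂ where no nonzero coefficient of f₁ is divisible by p, and let r be the remainder of f₂ upon division by ν_{t-1}. Then deg(f₁ + p·r) = deg(f₁), p does not divide the leading coefficient of f₁ + p·r, and deg(f₁) ≥ deg(ν_{t-1}) > deg(r). -/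
open Polynomial Matrix

section Aux

variable {D : Type*} [CommRing D] [IsDomain D] [IsPrincipalIdealRing D]
variable {n : ℕ} {p : D} {B : Matrix (Fin n) (Fin n) D}

/-- The null congruence set is closed under multiplication by arbitrary polynomials. -/
lemma aux_mem_mul (a : D) {g : Polynomial D} (hg : ∀ i j, a ∣ Polynomial.aeval B g i j)
    (q : Polynomial D) : ∀ i j, a ∣ Polynomial.aeval B (q * g) i j := by
  intro i j
  rw [_root_.map_mul, Matrix.mul_apply]
  exact Finset.dvd_sum fun l _ => Dvd.dvd.mul_left (hg l j) _

lemma aux_smul (a : D) (q : Polynomial D) (i j : Fin n) :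
    Polynomial.aeval B (Polynomial.C a * q) i j = a * Polynomial.aeval B q i j := by
  rw [← smul_eq_C_mul, _root_.map_smul, Matrix.smul_apply, smul_eq_mul]

/-- Key lemma: any element of `N_{(p^s)}(B)` of degree less than that of a
`p^s`-minimal polynomial has all coefficients divisible by `p`. -/
lemma aux_no_small (hp : Prime p) (s : ℕ) (ν : Polynomial D)
    (hmonic : ν.Monic)
    (hmem : ∀ i j, p ^ s ∣ Polynomial.aeval B ν i j)
    (hmin : ∀ g : Polynomial D, g.Monic → (∀ i j, p ^ s ∣ Polynomial.aeval B g i j) →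
      ν.natDegree ≤ g.natDegree) :
    ∀ h : Polynomial D, (∀ i j, p ^ s ∣ Polynomial.aeval B h i j) → h.degree < ν.degree →
      ∀ j, p ∣ h.coeff j := by
  have main : ∀ m : ℕ, ∀ h : Polynomial D, ∀ j : ℕ, ν.natDegree - j ≤ m →
      (∀ i j', p ^ s ∣ Polynomial.aeval B h i j') → h.degree < ν.degree →
      ¬ p ∣ h.coeff j → False := by
    intro m
    induction m with
    | zero =>
      intro h j hm hN hdeg hj
      have hc0 : h.coeff j ≠ 0 := fun h0 => hj (h0 ▸ dvd_zero p)
      have hh0 : h ≠ 0 := fun h0 => hc0 (by simp [h0])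
      have hdn : h.natDegree < ν.natDegree := natDegree_lt_natDegree hh0 hdeg
      have hjle : j ≤ h.natDegree := le_natDegree_of_ne_zero hc0
      omega
    | succ m ih =>
      intro h j hm hN hdeg hj
      have hc0 : h.coeff j ≠ 0 := fun h0 => hj (h0 ▸ dvd_zero p)
      have hh0 : h ≠ 0 := fun h0 => hc0 (by simp [h0])
      have hdn : h.natDegree < ν.natDegree := natDegree_lt_natDegree hh0 hdeg
      have hjle : j ≤ h.natDegree := le_natDegree_of_ne_zero hc0
      by_cases hlc : p ∣ h.leadingCoeff
      · -- shift case : multiply by a power of X and subtract a multiple of ν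
        have hjlt : j < h.natDegree := by
          rcases lt_or_eq_of_le hjle with h' | h'
          · exact h'
          · exact absurd (h' ▸ hlc) hj
        set e := ν.natDegree with he
        set m' := e - h.natDegree with hm'
        have hm'pos : 1 ≤ m' := by omega
        have hsum : h.natDegree + m' = e := by omega
        set h' := X ^ m' * h - Polynomial.C h.leadingCoeff * ν with hh'
        have hN' : ∀ i j', p ^ s ∣ Polynomial.aeval B h' i j' := by
          intro i j'
          rw [hh', map_sub, Matrix.sub_apply]
          exact dvd_sub (aux_mem_mul _ hN _ i j') (aux_mem_mul _ hmem _ i j')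
        have hcoeff' : ∀ k : ℕ, h'.coeff k =
            (X ^ m' * h).coeff k - h.leadingCoeff * ν.coeff k := by
          intro k; rw [hh']; simp [coeff_sub, coeff_C_mul]
        have hdeg' : h'.degree < ν.degree := by
          have hν0 : ν ≠ 0 := hmonic.ne_zero
          rw [degree_eq_natDegree hν0, ← he]
          rw [degree_lt_iff_coeff_zero]
          intro k hk
          rcases eq_or_lt_of_le hk with hke | hke
          · have hxk : (X ^ m' * h).coeff k = h.leadingCoeff := by
              have hk2 : k = h.natDegree + m' := by omega
              rw [hk2, coeff_X_pow_mul, coeff_natDegree]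
            have hνk : ν.coeff k = 1 := by
              have hk3 : k = ν.natDegree := by omega
              rw [hk3, coeff_natDegree, hmonic.leadingCoeff]
            rw [hcoeff' k, hxk, hνk, mul_one, sub_self]
          · have hxk : (X ^ m' * h).coeff k = 0 := by
              have hk2 : k = (k - m') + m' := by omega
              rw [hk2, coeff_X_pow_mul]
              exact coeff_eq_zero_of_natDegree_lt (by omega)
            have hνk : ν.coeff k = 0 := coeff_eq_zero_of_natDegree_lt (by omega)
            rw [hcoeff' k, hxk, hνk, mul_zero, sub_zero]
        have hj' : ¬ p ∣ h'.coeff (j + m') := by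
          rw [hcoeff' _, coeff_X_pow_mul]
          intro hdvd
          exact hj (by
            have : p ∣ h.leadingCoeff * ν.coeff (j + m') := hlc.mul_right _
            have := dvd_add hdvd this
            simpa using this)
        exact ih h' (j + m') (by omega) hN' hdeg' hj'
      · -- leading coefficient not divisible by p : build a monic polynomial of
        -- degree < deg ν in the null set, contradicting minimality
        obtain ⟨u, v, huv⟩ := ((hp.coprime_iff_not_dvd.mpr hlc).symm.pow_right (n := s))
        set d := h.natDegree with hd
        set g := Polynomial.C u * h + Polynomial.C (v * p ^ s) * X ^ d with hg
        have hgd : g.coeff d = 1 := by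
          rw [hg, coeff_add, coeff_C_mul, coeff_C_mul, coeff_X_pow, if_pos rfl, mul_one,
            show h.coeff d = h.leadingCoeff from coeff_natDegree]
          exact huv
        have hgdeg : g.natDegree ≤ d := by
          apply natDegree_add_le_of_degree_le
          · exact natDegree_C_mul_le _ _
          · exact (natDegree_C_mul_le _ _).trans (by simp)
        have hgmonic : g.Monic := monic_of_natDegree_le_of_coeff_eq_one d hgdeg hgd
        have hgN : ∀ i j', p ^ s ∣ Polynomial.aeval B g i j' := by
          intro i j'
          rw [hg, map_add, Matrix.add_apply]
          refine dvd_add (aux_mem_mul _ hN _ i j') ?_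
          rw [aux_smul]
          exact (dvd_mul_left _ _).mul_right _
        have := hmin g hgmonic hgN
        omega
  intro h hN hdeg j
  by_contra hj
  exact main ν.natDegree h j (by omega) hN hdeg hj

end Aux

theorem stmt7 (D : Type*) [CommRing D] [IsDomain D] [IsPrincipalIdealRing D]
    (n : ℕ) (p : D) (hp : Prime p) (B : Matrix (Fin n) (Fin n) D)
    (t : ℕ) (ht : 1 ≤ t) (ν : Polynomial D)
    (hν : ν.Monic ∧ (∀ i j, p ^ (t - 1) ∣ Polynomial.aeval B ν i j) ∧
      ∀ g : Polynomial D, g.Monic → (∀ i j, p ^ (t - 1) ∣ Polynomial.aeval B g i j) →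
        ν.natDegree ≤ g.natDegree)
    (f f₁ f₂ : Polynomial D)
    (hf : ∀ i j, p ^ t ∣ Polynomial.aeval B f i j)
    (hfp : ¬ ∀ k, p ∣ f.coeff k)
    (hsplit : f = f₁ + Polynomial.C p * f₂)
    (hf₁ : ∀ k, f₁.coeff k ≠ 0 → ¬ p ∣ f₁.coeff k) :
    (f₁ + Polynomial.C p * (f₂ %ₘ ν)).degree = f₁.degree ∧
    ¬ p ∣ (f₁ + Polynomial.C p * (f₂ %ₘ ν)).leadingCoeff ∧
    ν.degree ≤ f₁.degree ∧ (f₂ %ₘ ν).degree < ν.degree := by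
  obtain ⟨hmonic, hmem, hmin⟩ := hν
  set r := f₂ %ₘ ν with hr
  have hrdeg : r.degree < ν.degree := degree_modByMonic_lt f₂ hmonic
  have hf₁0 : f₁ ≠ 0 := by
    rintro rfl
    apply hfp
    intro k
    rw [hsplit, zero_add, coeff_C_mul]
    exact Dvd.intro _ rfl
  -- f₁ + p r belongs to N_{(p^{t-1})}
  have hsplit' : f₁ + Polynomial.C p * r =
      f - Polynomial.C p * (f₂ /ₘ ν) * ν := by
    rw [hr, modByMonic_eq_sub_mul_div _ ν, hsplit]; ring
  have hNf' : ∀ i j, p ^ (t - 1) ∣ Polynomial.aeval B (f₁ + Polynomial.C p * r) i j := by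
    intro i j
    rw [hsplit', map_sub, Matrix.sub_apply]
    refine dvd_sub ((pow_dvd_pow p (by omega)).trans (hf i j)) (aux_mem_mul _ hmem _ i j)
  have hCr : (Polynomial.C p * r).degree ≤ r.degree := by
    refine (degree_mul_le _ _).trans ?_
    calc (Polynomial.C p).degree + r.degree ≤ 0 + r.degree :=
          add_le_add degree_C_le le_rfl
      _ = r.degree := zero_add _
  have hprdeg : (Polynomial.C p * r).degree < ν.degree := lt_of_le_of_lt hCr hrdeg
  -- ν.degree ≤ f₁.degree
  have hkey : ν.degree ≤ f₁.degree := by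
    by_contra hlt
    push_neg at hlt
    have hd' : (f₁ + Polynomial.C p * r).degree < ν.degree :=
      lt_of_le_of_lt (degree_add_le _ _) (max_lt hlt hprdeg)
    have hdvd := aux_no_small hp (t - 1) ν hmonic hmem hmin _ hNf' hd' f₁.natDegree
    rw [coeff_add, coeff_C_mul] at hdvd
    have : p ∣ f₁.coeff f₁.natDegree := by
      have h1 : p ∣ p * r.coeff f₁.natDegree := Dvd.intro _ rfl
      have := dvd_sub hdvd h1
      simpa using this
    have hne : f₁.coeff f₁.natDegree ≠ 0 := by
      rw [coeff_natDegree]; exact leadingCoeff_ne_zero.mpr hf₁0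
    exact hf₁ f₁.natDegree hne this
  have hprdeg' : (Polynomial.C p * r).degree < f₁.degree := lt_of_lt_of_le hprdeg hkey
  have hdeq : (f₁ + Polynomial.C p * r).degree = f₁.degree :=
    degree_add_eq_left_of_degree_lt hprdeg'
  refine ⟨hdeq, ?_, hkey, hrdeg⟩
  have hl : (f₁ + Polynomial.C p * r).leadingCoeff = f₁.leadingCoeff :=
    leadingCoeff_add_of_degree_lt' hprdeg'
  rw [hl]
  have hne : f₁.coeff f₁.natDegree ≠ 0 := by
    rw [coeff_natDegree]; exact leadingCoeff_ne_zero.mpr hf₁0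
  rw [← coeff_natDegree]
  exact hf₁ f₁.natDegree hne
end

section
/- Let D be a principal ideal domain, p ∈ D prime, t ≥ 1, B ∈ M_n(D), ν_{t-1} a (p^{t-1})-minimal polynomial of B, ν_t a (p^t)-minimal polynomial, and f ∈ N_{(p^t)}(B) with f ∉ p·D[X]. Then deg(f) ≥ deg(ν_t) ≥ deg(ν_{t-1}). -/
open Polynomial Matrix

private lemma dvd_mul_entry {D : Type*} [CommRing D] {n : ℕ} (q : D)
    (M N : Matrix (Fin n) (Fin n) D) (h : ∀ i j, q ∣ N i j) :
    ∀ i j, q ∣ (M * N) i j := by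
  intro i j
  rw [Matrix.mul_apply]
  exact Finset.dvd_sum fun k _ => (h k j).mul_left (M i k)

private lemma exists_min {D : Type*} [CommRing D] [IsDomain D] {n : ℕ} (p : D)
    (B : Matrix (Fin n) (Fin n) D) (s : ℕ) :
    ∃ ν : Polynomial D, ν.Monic ∧ (∀ i j, p ^ s ∣ Polynomial.aeval B ν i j) ∧
      ∀ g : Polynomial D, g.Monic → (∀ i j, p ^ s ∣ Polynomial.aeval B g i j) →
        ν.natDegree ≤ g.natDegree := by
  classical
  have hS : ∃ d : ℕ, ∃ g : Polynomial D, g.Monic ∧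
      (∀ i j, p ^ s ∣ Polynomial.aeval B g i j) ∧ g.natDegree = d := by
    refine ⟨(charpoly B).natDegree, charpoly B, charpoly_monic B, ?_, rfl⟩
    intro i j
    simp [Matrix.aeval_self_charpoly]
  obtain ⟨g, hg1, hg2, hg3⟩ := Nat.find_spec hS
  refine ⟨g, hg1, hg2, fun h hh1 hh2 => ?_⟩
  rw [hg3]
  exact Nat.find_le ⟨h, hh1, hh2, rfl⟩

private lemma key {D : Type*} [CommRing D] [IsDomain D] [IsPrincipalIdealRing D] {n : ℕ}
    {p : D} (hp : Prime p) (B : Matrix (Fin n) (Fin n) D) :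
    ∀ (t : ℕ) (ν : Polynomial D), ν.Monic → (∀ i j, p ^ t ∣ Polynomial.aeval B ν i j) →
      (∀ g : Polynomial D, g.Monic → (∀ i j, p ^ t ∣ Polynomial.aeval B g i j) →
        ν.natDegree ≤ g.natDegree) →
      ∀ f : Polynomial D, (∀ i j, p ^ t ∣ Polynomial.aeval B f i j) →
        (∃ k, ¬ p ∣ f.coeff k) → ν.natDegree ≤ f.natDegree := by
  intro t
  induction t with
  | zero =>
    intro ν hν hνN hνmin f hfN hfc
    have : ν.natDegree ≤ (1 : Polynomial D).natDegree :=
      hνmin 1 monic_one (fun i j => by simp)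
    simp only [natDegree_one, Nat.le_zero] at this
    simp [this]
  | succ m ih =>
    intro ν hν hνN hνmin f hfN hfc
    obtain ⟨ν', hν'1, hν'2, hν'3⟩ := exists_min p B m
    have keyC : ∀ (a : D) (q : Polynomial D),
        Polynomial.aeval B (C a * q) = a • Polynomial.aeval B q := by
      intro a q
      rw [← Polynomial.smul_eq_C_mul]
      exact _root_.map_smul (Polynomial.aeval B) a q
    -- strong induction on the degree of f
    have H : ∀ d (f : Polynomial D), f.natDegree ≤ d →
        (∀ i j, p ^ (m + 1) ∣ Polynomial.aeval B f i j) →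
        (∃ k, ¬ p ∣ f.coeff k) → ν.natDegree ≤ f.natDegree := by
      intro d
      induction d using Nat.strong_induction_on with
      | _ d ihd =>
        intro f hfd hfN hfc
        have hf0 : f ≠ 0 := by
          rintro rfl
          obtain ⟨k, hk⟩ := hfc
          simp at hk
        by_cases hb : p ∣ f.leadingCoeff
        · -- leading coefficient divisible by p: reduce degree
          obtain ⟨c, hc⟩ := hb
          have hfm : ∀ i j, p ^ m ∣ Polynomial.aeval B f i j := fun i j =>
            (pow_dvd_pow p (Nat.le_succ m)).trans (hfN i j)
          have he : ν'.natDegree ≤ f.natDegree := ih ν' hν'1 hν'2 hν'3 f hfm hfc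
          set e := ν'.natDegree with hedef
          set h : Polynomial D := C (c * p) * (X ^ (f.natDegree - e) * ν') with hhdef
          have hmon : (X ^ (f.natDegree - e) * ν' : Polynomial D).Monic :=
            (monic_X_pow _).mul hν'1
          have hnd' : (X ^ (f.natDegree - e) * ν' : Polynomial D).natDegree = f.natDegree := by
            rw [(monic_X_pow _).natDegree_mul hν'1, natDegree_X_pow, Nat.sub_add_cancel he]
          have hcoeffh : ∀ k, h.coeff k = (c * p) * (X ^ (f.natDegree - e) * ν').coeff k := by
            intro k; rw [hhdef, coeff_C_mul]
          have hhtop : h.coeff f.natDegree = c * p := by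
            have h1 := hmon.coeff_natDegree
            rw [hnd'] at h1
            rw [hcoeffh, h1, mul_one]
          set g : Polynomial D := f - h with hgdef
          have hgc : ∃ k, ¬ p ∣ g.coeff k := by
            obtain ⟨k, hk⟩ := hfc
            refine ⟨k, fun hdvd => hk ?_⟩
            have : f.coeff k = g.coeff k + h.coeff k := by
              simp [hgdef]
            rw [this]
            exact dvd_add hdvd (by rw [hcoeffh]; exact ⟨c * (X ^ (f.natDegree - e) * ν').coeff k, by ring⟩)
          have hg0 : g ≠ 0 := by
            rintro hg
            obtain ⟨k, hk⟩ := hgc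
            rw [hg] at hk
            simp at hk
          have hgtop : g.coeff f.natDegree = 0 := by
            rw [hgdef, Polynomial.coeff_sub, hhtop, Polynomial.coeff_natDegree, hc]
            ring
          have hglt : g.natDegree < f.natDegree := by
            have hle : g.natDegree ≤ f.natDegree := by
              refine (Polynomial.natDegree_sub_le f h).trans ?_
              simp only [sup_le_iff]
              exact ⟨le_rfl, (natDegree_C_mul_le _ _).trans hnd'.le⟩
            rcases lt_or_eq_of_le hle with h' | h'
            · exact h'
            · exfalso
              apply hg0
              have h2 : g.coeff g.natDegree = g.leadingCoeff := Polynomial.coeff_natDegree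
              rw [h', hgtop] at h2
              exact Polynomial.leadingCoeff_eq_zero.mp h2.symm
          have hgN : ∀ i j, p ^ (m + 1) ∣ Polynomial.aeval B g i j := by
            intro i j
            have : Polynomial.aeval B g = Polynomial.aeval B f -
                (c * p) • (B ^ (f.natDegree - e) * Polynomial.aeval B ν') := by
              rw [hgdef, map_sub, hhdef, keyC, _root_.map_mul, map_pow, aeval_X]
            rw [this, Matrix.sub_apply, Matrix.smul_apply, smul_eq_mul]
            refine dvd_sub (hfN i j) ?_
            obtain ⟨w, hw⟩ := dvd_mul_entry (p ^ m) _ _ hν'2 i j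
            rw [hw, pow_succ]
            exact ⟨c * w, by ring⟩
          have := ihd g.natDegree (lt_of_lt_of_le hglt hfd) g le_rfl hgN hgc
          exact this.trans hglt.le
        · -- leading coefficient coprime to p: build a monic polynomial of the same degree
          have hcop : IsCoprime (p ^ (m + 1)) f.leadingCoeff :=
            ((hp.irreducible.coprime_iff_not_dvd).2 hb).pow_left
          obtain ⟨u, v, huv⟩ := hcop
          set d' := f.natDegree with hd'
          set g : Polynomial D := C v * f + C (u * p ^ (m + 1)) * X ^ d' with hgdef
          have hgnd : g.natDegree ≤ d' := by
            refine (Polynomial.natDegree_add_le _ _).trans ?_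
            simp only [sup_le_iff]
            exact ⟨(natDegree_C_mul_le _ _).trans le_rfl,
              (natDegree_C_mul_le _ _).trans (natDegree_X_pow _).le⟩
          have hgcoeff : g.coeff d' = 1 := by
            rw [hgdef, Polynomial.coeff_add, coeff_C_mul, coeff_C_mul, coeff_X_pow,
              if_pos rfl, mul_one]
            have h1 : f.coeff d' = f.leadingCoeff := Polynomial.coeff_natDegree
            rw [h1]
            linear_combination huv
          have hgmonic : g.Monic := monic_of_natDegree_le_of_coeff_eq_one d' hgnd hgcoeff
          have hgdeg : g.natDegree = d' := by
            refine le_antisymm hgnd ?_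
            exact Polynomial.le_natDegree_of_ne_zero (by rw [hgcoeff]; exact one_ne_zero)
          have hgN : ∀ i j, p ^ (m + 1) ∣ Polynomial.aeval B g i j := by
            intro i j
            have : Polynomial.aeval B g = v • Polynomial.aeval B f +
                (u * p ^ (m + 1)) • (B ^ d') := by
              rw [hgdef, map_add, keyC, keyC, map_pow, aeval_X]
            rw [this, Matrix.add_apply, Matrix.smul_apply, Matrix.smul_apply, smul_eq_mul,
              smul_eq_mul]
            exact dvd_add ((hfN i j).mul_left v) ⟨u * (B ^ d') i j, by ring⟩
          have := hνmin g hgmonic hgN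
          rw [hgdeg] at this
          exact this
    exact H f.natDegree f le_rfl hfN hfc

theorem stmt8 (D : Type*) [CommRing D] [IsDomain D] [IsPrincipalIdealRing D]
    (n : ℕ) (p : D) (hp : Prime p) (B : Matrix (Fin n) (Fin n) D)
    (t : ℕ) (ht : 1 ≤ t) (νt νt1 : Polynomial D)
    (hνt : νt.Monic ∧ (∀ i j, p ^ t ∣ Polynomial.aeval B νt i j) ∧
      ∀ g : Polynomial D, g.Monic → (∀ i j, p ^ t ∣ Polynomial.aeval B g i j) →
        νt.natDegree ≤ g.natDegree)
    (hνt1 : νt1.Monic ∧ (∀ i j, p ^ (t - 1) ∣ Polynomial.aeval B νt1 i j) ∧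
      ∀ g : Polynomial D, g.Monic → (∀ i j, p ^ (t - 1) ∣ Polynomial.aeval B g i j) →
        νt1.natDegree ≤ g.natDegree)
    (f : Polynomial D)
    (hf : ∀ i j, p ^ t ∣ Polynomial.aeval B f i j)
    (hfp : ¬ ∀ k, p ∣ f.coeff k) :
    νt1.natDegree ≤ νt.natDegree ∧ νt.natDegree ≤ f.natDegree := by
  push_neg at hfp
  constructor
  · exact hνt1.2.2 νt hνt.1 fun i j =>
      (pow_dvd_pow p (Nat.sub_le t 1)).trans (hνt.2.1 i j)
  · exact key hp B t νt hνt.1 hνt.2.1 hνt.2.2 f hf hfp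
end

section
/- Let D be a principal ideal domain, p ∈ D prime, t ≥ 2, B ∈ M_n(D), and let ν_t, ν_{t-1} be (p^t)- and (p^{t-1})-minimal polynomials of B respectively. If deg(ν_t) = deg(ν_{t-1}), then ν_t − ν_{t-1} ∈ p·N_{(p^{t-2})}(B) and (ν_t) + p·N_{(p^{t-2})}(B) = (ν_{t-1}) + p·N_{(p^{t-2})}(B). -/
open Polynomial Matrix

set_option linter.unusedSectionVars false
open scoped Classical

section Aux

variable {D : Type*} [CommRing D] [IsDomain D] [IsPrincipalIdealRing D]
  {n : ℕ} (p : D) (B : Matrix (Fin n) (Fin n) D)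

/-- membership in the `(p^s)`-null ideal -/
def NM (s : ℕ) (f : D[X]) : Prop := ∀ i j, p ^ s ∣ Polynomial.aeval B f i j

variable {p B}

lemma NM.mono {s s' : ℕ} (hss : s' ≤ s) {f : D[X]} (hf : NM p B s f) : NM p B s' f :=
  fun i j => dvd_trans (pow_dvd_pow p hss) (hf i j)

lemma dvd_entries_mul_left {c : D} {A M : Matrix (Fin n) (Fin n) D}
    (h : ∀ i j, c ∣ M i j) : ∀ i j, c ∣ (A * M) i j := by
  intro i j
  rw [Matrix.mul_apply]
  exact Finset.dvd_sum fun k _ => (h k j).mul_left _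

lemma aeval_C_mul (a : D) (f : D[X]) :
    Polynomial.aeval B (C a * f) = a • Polynomial.aeval B f := by
  rw [_root_.map_mul, aeval_C, Algebra.smul_def]

lemma NM.C_mul {s : ℕ} (a : D) {f : D[X]} (hf : NM p B s f) : NM p B s (C a * f) := by
  intro i j
  rw [aeval_C_mul, Matrix.smul_apply, smul_eq_mul]
  exact (hf i j).mul_left a

lemma NM.mul_left' {s : ℕ} (q : D[X]) {f : D[X]} (hf : NM p B s f) : NM p B s (q * f) := by
  intro i j
  rw [_root_.map_mul]
  exact dvd_entries_mul_left hf i j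

lemma NM.add {s : ℕ} {f g : D[X]} (hf : NM p B s f) (hg : NM p B s g) : NM p B s (f + g) := by
  intro i j
  rw [map_add, Matrix.add_apply]
  exact dvd_add (hf i j) (hg i j)

lemma NM.sub {s : ℕ} {f g : D[X]} (hf : NM p B s f) (hg : NM p B s g) : NM p B s (f - g) := by
  intro i j
  rw [map_sub, Matrix.sub_apply]
  exact dvd_sub (hf i j) (hg i j)

lemma NM.neg {s : ℕ} {f : D[X]} (hf : NM p B s f) : NM p B s (-f) := by
  intro i j
  rw [map_neg, Matrix.neg_apply]
  exact (hf i j).neg_right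

lemma NM_C_mul_X_pow {s : ℕ} {c : D} (hc : p ^ s ∣ c) (r : ℕ) : NM p B s (C c * X ^ r) := by
  intro i j
  rw [aeval_C_mul, Matrix.smul_apply, smul_eq_mul]
  exact hc.mul_right _

variable (p B)

lemma exists_monic_NM (s : ℕ) : ∃ r : ℕ, ∃ f : D[X], f.Monic ∧ NM p B s f ∧ f.natDegree = r :=
  ⟨(Matrix.charpoly B).natDegree, Matrix.charpoly B, Matrix.charpoly_monic B,
    fun i j => by rw [Matrix.aeval_self_charpoly]; exact dvd_zero _, rfl⟩

/-- minimal degree of a monic polynomial in the `(p^s)`-null ideal -/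
noncomputable def mdeg (s : ℕ) : ℕ := Nat.find (exists_monic_NM p B s)

lemma exists_nu (s : ℕ) : ∃ f : D[X], f.Monic ∧ NM p B s f ∧ f.natDegree = mdeg p B s :=
  Nat.find_spec (exists_monic_NM p B s)

variable {p B}

lemma mdeg_le {s : ℕ} {g : D[X]} (hm : g.Monic) (hN : NM p B s g) :
    mdeg p B s ≤ g.natDegree :=
  Nat.find_min' (exists_monic_NM p B s) ⟨g, hm, hN, rfl⟩

lemma natDegree_lt_of_coeff_eq_zero {q : D[X]} {r : ℕ} (hle : q.natDegree ≤ r)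
    (h0 : q ≠ 0) (hc : q.coeff r = 0) : q.natDegree < r := by
  rcases lt_or_eq_of_le hle with h | h
  · exact h
  · exfalso
    apply h0
    rw [← leadingCoeff_eq_zero, leadingCoeff, h, hc]

lemma C_p_dvd_C {a : D} (hpa : p ∣ a) : C p ∣ C a := by
  obtain ⟨k, rfl⟩ := hpa
  exact ⟨C k, by rw [C_mul]⟩

/-- Key lemma: any polynomial in the `(p^s)`-null ideal which is not divisible by `p`
has degree at least `mdeg p B s`. -/
lemma key_s9 (hp : Prime p) (s : ℕ) :
    ∀ r : ℕ, ∀ f : D[X], f.natDegree = r → NM p B s f → ¬ (C p ∣ f) → mdeg p B s ≤ r := by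
  induction s using Nat.strong_induction_on with
  | _ s ihs =>
  intro r
  induction r using Nat.strong_induction_on with
  | _ r ihr =>
  intro f hdeg hN hcp
  have hf0 : f ≠ 0 := fun h => hcp (h ▸ dvd_zero _)
  set c := f.leadingCoeff with hc
  have hc0 : c ≠ 0 := leadingCoeff_ne_zero.mpr hf0
  by_cases hpc : p ∣ c
  · -- p divides the leading coefficient
    have hr0 : r ≠ 0 := by
      rintro rfl
      apply hcp
      rw [C_dvd_iff_dvd_coeff]
      intro i
      rcases Nat.eq_zero_or_pos i with hi | hi
      · subst hi
        have : f.coeff 0 = c := by rw [hc, leadingCoeff, ← hdeg]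
        rw [this]; exact hpc
      · rw [coeff_eq_zero_of_natDegree_lt (by omega)]
        exact dvd_zero _
    by_cases hpsc : p ^ s ∣ c
    · -- p^s divides the leading coefficient: strip leading term
      set f' := f - C c * X ^ r with hf'
      have hNf' : NM p B s f' := hN.sub (NM_C_mul_X_pow hpsc r)
      have hcpf' : ¬ C p ∣ f' := by
        intro h
        apply hcp
        have : f = f' + C c * X ^ r := by ring
        rw [this]
        exact dvd_add h ((C_p_dvd_C hpc).mul_right _)
      have hf'0 : f' ≠ 0 := fun h => hcpf' (h ▸ dvd_zero _)
      have hle : f'.natDegree ≤ r := by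
        refine le_trans (natDegree_sub_le _ _)
          (max_le hdeg.le (le_trans (natDegree_C_mul_le _ _) (by simp)))
      have hco : f'.coeff r = 0 := by
        rw [hf', coeff_sub, coeff_C_mul, coeff_X_pow, if_pos rfl, mul_one, ← hdeg,
          ← leadingCoeff, ← hc, sub_self]
      have hlt : f'.natDegree < r := natDegree_lt_of_coeff_eq_zero hle hf'0 hco
      exact le_trans (ihr f'.natDegree hlt f' rfl hNf' hcpf') hlt.le
    · -- p^j exactly divides the leading coefficient, 1 ≤ j < s
      have hs1 : 1 ≤ s := by
        by_contra h
        apply hpsc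
        interval_cases s
        · simp
      set j := Nat.findGreatest (fun k => p ^ k ∣ c) s with hjdef
      have hj1 : 1 ≤ j := Nat.le_findGreatest (P := fun k => p ^ k ∣ c) hs1 (show p ^ 1 ∣ c by simpa using hpc)
      have hjdvd : p ^ j ∣ c := Nat.findGreatest_spec (P := fun k => p ^ k ∣ c) hs1 (show p ^ 1 ∣ c by simpa using hpc)
      have hjle : j ≤ s := Nat.findGreatest_le s
      have hjs : j < s := lt_of_le_of_ne hjle (fun h => hpsc (h ▸ hjdvd))
      have hjsucc : ¬ p ^ (j + 1) ∣ c :=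
        Nat.findGreatest_is_greatest (Nat.lt_succ_self j) (by omega)
      obtain ⟨u, hu⟩ := hjdvd
      have hpu : ¬ p ∣ u := by
        intro ⟨v, hv⟩
        exact hjsucc ⟨v, by rw [hu, hv, pow_succ]; ring⟩
      obtain ⟨b, a, hab⟩ := ((hp.coprime_iff_not_dvd.mpr hpu).pow_left (m := s))
      -- b * p ^ s + a * u = 1
      have hpa : ¬ p ∣ a := by
        intro hdvd
        exact hp.not_dvd_one (hab ▸ dvd_add ((dvd_pow_self p (by omega : s ≠ 0)).mul_left b)
          (hdvd.mul_right u))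
      set g := C a * f + C (b * p ^ (s + j)) * X ^ r with hg
      have hNg : NM p B s g := (hN.C_mul a).add (NM_C_mul_X_pow ⟨b * p ^ j, by ring⟩ r)
      have hgr : g.coeff r = p ^ j := by
        rw [hg, coeff_add, coeff_C_mul, coeff_C_mul, coeff_X_pow, if_pos rfl, mul_one,
          ← hdeg, ← leadingCoeff, ← hc, hu]
        calc a * (p ^ j * u) + b * p ^ (s + j) = (b * p ^ s + a * u) * p ^ j := by ring
        _ = p ^ j := by rw [hab, one_mul]
      have hgle : g.natDegree ≤ r := by
        refine le_trans (natDegree_add_le _ _)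
          (max_le (le_trans (natDegree_C_mul_le _ _) hdeg.le)
            (le_trans (natDegree_C_mul_le _ _) (by simp)))
      have hcpg : ¬ C p ∣ g := by
        intro h
        have h2 : C p ∣ C a * f := by
          have : C a * f = g - C (b * p ^ (s + j)) * X ^ r := by rw [hg]; ring
          rw [this]
          exact dvd_sub h ((C_p_dvd_C
            ((dvd_pow_self p (by omega : s + j ≠ 0)).mul_left b)).mul_right _)
        rcases (Polynomial.prime_C_iff.mpr hp).dvd_mul.mp h2 with h3 | h3
        · apply hpa
          obtain ⟨k, hk⟩ := h3
          have := congrArg (fun q => Polynomial.coeff q 0) hk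
          simp [coeff_C_mul] at this
          exact ⟨k.coeff 0, this⟩
        · exact hcp h3
      have hg0 : g ≠ 0 := fun h => hcpg (h ▸ dvd_zero _)
      have hgdeg : g.natDegree = r := by
        refine le_antisymm hgle (le_natDegree_of_ne_zero ?_)
        rw [hgr]
        exact pow_ne_zero _ hp.ne_zero
      -- apply outer induction at level s - j
      have hd' : mdeg p B (s - j) ≤ r :=
        ihs (s - j) (by omega) r g hgdeg (hNg.mono (by omega)) hcpg
      obtain ⟨ν', hν'm, hν'N, hν'deg⟩ := exists_nu p B (s - j)
      set d' := mdeg p B (s - j) with hd'def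
      set h := g - C (p ^ j) * (X ^ (r - d') * ν') with hh
      have hNh : NM p B s h := by
        apply hNg.sub
        intro i i'
        rw [aeval_C_mul, Matrix.smul_apply, smul_eq_mul, _root_.map_mul]
        have : p ^ s = p ^ j * p ^ (s - j) := by rw [← pow_add]; congr 1; omega
        rw [this]
        exact mul_dvd_mul_left _ (by rw [map_pow, aeval_X]; exact dvd_entries_mul_left hν'N i i')
      have hcph : ¬ C p ∣ h := by
        intro hd
        apply hcpg
        have : g = h + C (p ^ j) * (X ^ (r - d') * ν') := by rw [hh]; ring
        rw [this]
        exact dvd_add hd ((C_p_dvd_C (dvd_pow_self p (by omega))).mul_right _)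
      have hh0 : h ≠ 0 := fun e => hcph (e ▸ dvd_zero _)
      have hhle : h.natDegree ≤ r := by
        apply le_trans (natDegree_sub_le _ _)
        refine max_le hgle (le_trans (natDegree_C_mul_le _ _) (le_trans (natDegree_mul_le) ?_))
        simp [hν'deg]
        omega
      have hhco : h.coeff r = 0 := by
        have hco2 := coeff_X_pow_mul ν' (r - d') d'
        rw [show d' + (r - d') = r from by omega] at hco2
        rw [hh, coeff_sub, hgr, coeff_C_mul, hco2, ← hν'deg, ← leadingCoeff,
          hν'm.leadingCoeff, mul_one, sub_self]
      have hhlt : h.natDegree < r := natDegree_lt_of_coeff_eq_zero hhle hh0 hhco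
      exact le_trans (ihr h.natDegree hhlt h rfl hNh hcph) hhlt.le
  · -- p does not divide the leading coefficient: build a monic polynomial of degree r
    obtain ⟨v, a, hab⟩ := ((hp.coprime_iff_not_dvd.mpr hpc).pow_left (m := s))
    -- v * p ^ s + a * c = 1
    set g := C a * f + C (v * p ^ s) * X ^ r with hg
    have hNg : NM p B s g := (hN.C_mul a).add (NM_C_mul_X_pow (dvd_mul_left (p ^ s) v) r)
    have hgr : g.coeff r = 1 := by
      rw [hg, coeff_add, coeff_C_mul, coeff_C_mul, coeff_X_pow, if_pos rfl, mul_one,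
        ← hdeg, ← leadingCoeff, ← hc, ← hab]
      ring
    have hgle : g.natDegree ≤ r := by
      refine le_trans (natDegree_add_le _ _)
        (max_le (le_trans (natDegree_C_mul_le _ _) hdeg.le)
          (le_trans (natDegree_C_mul_le _ _) (by simp)))
    have hmonic : g.Monic := monic_of_natDegree_le_of_coeff_eq_one r hgle hgr
    exact le_trans (mdeg_le hmonic hNg) hgle

end Aux

theorem stmt9 (D : Type*) [CommRing D] [IsDomain D] [IsPrincipalIdealRing D]
    (n : ℕ) (p : D) (hp : Prime p) (B : Matrix (Fin n) (Fin n) D)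
    (t : ℕ) (ht : 2 ≤ t) (νt νt1 : Polynomial D)
    (hνt : νt.Monic ∧ (∀ i j, p ^ t ∣ Polynomial.aeval B νt i j) ∧
      ∀ g : Polynomial D, g.Monic → (∀ i j, p ^ t ∣ Polynomial.aeval B g i j) →
        νt.natDegree ≤ g.natDegree)
    (hνt1 : νt1.Monic ∧ (∀ i j, p ^ (t - 1) ∣ Polynomial.aeval B νt1 i j) ∧
      ∀ g : Polynomial D, g.Monic → (∀ i j, p ^ (t - 1) ∣ Polynomial.aeval B g i j) →
        νt1.natDegree ≤ g.natDegree)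
    (hdeg : νt.natDegree = νt1.natDegree) :
    (∃ g : Polynomial D, (∀ i j, p ^ (t - 2) ∣ Polynomial.aeval B g i j) ∧
      νt - νt1 = Polynomial.C p * g) ∧
    (∀ f : Polynomial D,
      (∃ a h : Polynomial D, (∀ i j, p ^ (t - 2) ∣ Polynomial.aeval B h i j) ∧
        f = a * νt + Polynomial.C p * h) ↔
      (∃ a h : Polynomial D, (∀ i j, p ^ (t - 2) ∣ Polynomial.aeval B h i j) ∧
        f = a * νt1 + Polynomial.C p * h)) := by
  obtain ⟨hm_t, hN_t, hmin_t⟩ := hνt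
  obtain ⟨hm_t1, hN_t1, hmin_t1⟩ := hνt1
  have hNd : ∀ i j, p ^ (t - 1) ∣ Polynomial.aeval B (νt - νt1) i j := by
    intro i j
    rw [map_sub, Matrix.sub_apply]
    exact dvd_sub (dvd_trans (pow_dvd_pow p (by omega)) (hN_t i j)) (hN_t1 i j)
  have hdvd : Polynomial.C p ∣ (νt - νt1) := by
    by_cases hd0 : νt - νt1 = 0
    · rw [hd0]; exact dvd_zero _
    · by_contra hnd
      have hm0 : νt1.natDegree ≠ 0 := by
        intro h
        apply hd0
        rw [hm_t.natDegree_eq_zero.mp (hdeg.trans h),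
          hm_t1.natDegree_eq_zero.mp h, sub_self]
      have hddeg : (νt - νt1).natDegree < νt1.natDegree := by
        have h1 : (νt - νt1).degree < νt.degree :=
          degree_sub_lt (by rw [degree_eq_natDegree hm_t.ne_zero,
              degree_eq_natDegree hm_t1.ne_zero, hdeg]) hm_t.ne_zero
            (by rw [hm_t.leadingCoeff, hm_t1.leadingCoeff])
        rw [degree_eq_natDegree hm_t.ne_zero, hdeg] at h1
        exact (natDegree_lt_iff_degree_lt hd0).mpr h1
      have h2 := key_s9 hp (t - 1) (νt - νt1).natDegree _ rfl hNd hnd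
      obtain ⟨ν', hν'm, hν'N, hν'deg⟩ := exists_nu p B (t - 1)
      have h3 : νt1.natDegree ≤ mdeg p B (t - 1) := hν'deg ▸ hmin_t1 ν' hν'm hν'N
      omega
  obtain ⟨g, hg⟩ := hdvd
  have hNg : ∀ i j, p ^ (t - 2) ∣ Polynomial.aeval B g i j := by
    intro i j
    have h1 := hNd i j
    rw [hg, aeval_C_mul, Matrix.smul_apply, smul_eq_mul] at h1
    have e : p ^ (t - 1) = p * p ^ (t - 2) := by
      have e2 : t - 1 = (t - 2) + 1 := by omega
      rw [e2, pow_succ, mul_comm]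
    rw [e] at h1
    exact (mul_dvd_mul_iff_left hp.ne_zero).mp h1
  have swap : ∀ X' Y' g0 : Polynomial D, X' - Y' = Polynomial.C p * g0 →
      (∀ i j, p ^ (t - 2) ∣ Polynomial.aeval B g0 i j) →
      ∀ f a h : Polynomial D, (∀ i j, p ^ (t - 2) ∣ Polynomial.aeval B h i j) →
      f = a * X' + Polynomial.C p * h →
      ∃ a' h' : Polynomial D, (∀ i j, p ^ (t - 2) ∣ Polynomial.aeval B h' i j) ∧
        f = a' * Y' + Polynomial.C p * h' := by
    intro X' Y' g0 hXY hg0 f a h hh hf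
    refine ⟨a, h + a * g0, ?_, ?_⟩
    · intro i j
      rw [map_add, Matrix.add_apply]
      refine dvd_add (hh i j) ?_
      rw [_root_.map_mul]
      exact dvd_entries_mul_left hg0 i j
    · rw [hf]
      linear_combination a * hXY
  have hg' : νt1 - νt = Polynomial.C p * (-g) := by
    rw [← neg_sub νt νt1, hg]
    ring
  have hNg' : ∀ i j, p ^ (t - 2) ∣ Polynomial.aeval B (-g) i j := by
    intro i j
    rw [map_neg, Matrix.neg_apply]
    exact (hNg i j).neg_right
  refine ⟨⟨g, hNg, hg⟩, fun f => ⟨fun ⟨a, h, hh, hf⟩ => swap νt νt1 g hg hNg f a h hh hf,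
    fun ⟨a, h, hh, hf⟩ => swap νt1 νt (-g) hg' hNg' f a h hh hf⟩⟩
end

section
/- Let D be a principal ideal domain, p ∈ D prime, B ∈ M_n(D), and t ≥ 1. Then f ∈ N_{(p^t)}(B) if and only if there exists Q ∈ M_n(D[X]) with adj(X·I − B)·f(X) ≡ Q(X)·χ_B(X) (mod p^t), where the congruence is entrywise coefficientwise divisibility by p^t. -/
open Polynomial Matrix

/-- Noncommutative "factor theorem": for a polynomial over any ring,
`g - C (g.eval a)` is right-divisible by `X - C a`. -/
lemma poly_div_aux {S : Type*} [Ring S] (g : Polynomial S) (a : S) :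
    ∃ q : Polynomial S, g - Polynomial.C (g.eval a) = q * (Polynomial.X - Polynomial.C a) := by
  induction g using Polynomial.induction_on' with
  | add u v hu hv =>
    obtain ⟨qu, hqu⟩ := hu
    obtain ⟨qv, hqv⟩ := hv
    refine ⟨qu + qv, ?_⟩
    rw [eval_add, C_add, add_mul, ← hqu, ← hqv]
    abel
  | monomial k c =>
    refine ⟨C c * ∑ i ∈ Finset.range k, X ^ i * (C a) ^ (k - 1 - i), ?_⟩
    rw [mul_assoc, (commute_X (C a)).geom_sum₂_mul, eval_monomial,
      ← C_mul_X_pow_eq_monomial, mul_sub, ← C_pow, ← C_mul]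

theorem stmt11 (D : Type*) [CommRing D] [IsDomain D] [IsPrincipalIdealRing D]
    (n : ℕ) (p : D) (hp : Prime p) (B : Matrix (Fin n) (Fin n) D)
    (t : ℕ) (ht : 1 ≤ t) (f : Polynomial D) :
    (∀ i j, p ^ t ∣ Polynomial.aeval B f i j) ↔
      ∃ Q : Matrix (Fin n) (Fin n) (Polynomial D),
        ∀ i j k, p ^ t ∣
          ((f • (Matrix.charmatrix B).adjugate) i j - (B.charpoly • Q) i j).coeff k := by
  constructor
  · intro h
    obtain ⟨q, hq⟩ := poly_div_aux (f.map (algebraMap D (Matrix (Fin n) (Fin n) D))) B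
    rw [eval_map, ← aeval_def] at hq
    refine ⟨matPolyEquiv.symm q, ?_⟩
    have h1 : f • (1 : Matrix (Fin n) (Fin n) (Polynomial D)) - (aeval B f).map C
        = matPolyEquiv.symm q * charmatrix B := by
      apply matPolyEquiv.injective
      rw [map_sub, matPolyEquiv_smul_one, _root_.map_mul, AlgEquiv.apply_symm_apply,
        matPolyEquiv_charmatrix, matPolyEquiv_map_C]
      exact hq
    have h2 : f • (charmatrix B).adjugate
        = B.charpoly • matPolyEquiv.symm q + ((aeval B f).map C) * (charmatrix B).adjugate := by
      calc f • (charmatrix B).adjugate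
          = (f • (1 : Matrix (Fin n) (Fin n) (Polynomial D)) - (aeval B f).map C)
              * (charmatrix B).adjugate
            + ((aeval B f).map C) * (charmatrix B).adjugate := by
            rw [sub_mul, Matrix.smul_mul, one_mul, sub_add_cancel]
        _ = (matPolyEquiv.symm q * charmatrix B) * (charmatrix B).adjugate
            + ((aeval B f).map C) * (charmatrix B).adjugate := by rw [h1]
        _ = B.charpoly • matPolyEquiv.symm q
            + ((aeval B f).map C) * (charmatrix B).adjugate := by
            rw [mul_assoc, Matrix.mul_adjugate, Matrix.mul_smul, mul_one]
            rfl
    intro i j k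
    have h3 : (f • (charmatrix B).adjugate) i j - (B.charpoly • matPolyEquiv.symm q) i j
        = (((aeval B f).map C) * (charmatrix B).adjugate) i j := by
      rw [h2, Matrix.add_apply]
      ring
    rw [h3, Matrix.mul_apply, Polynomial.finset_sum_coeff]
    refine Finset.dvd_sum fun l _ => ?_
    rw [Matrix.map_apply, coeff_C_mul]
    exact Dvd.dvd.mul_right (h i l) _
  · rintro ⟨Q, h⟩ i j
    set I : Ideal D := Ideal.span {p ^ t} with hI
    set π : D →+* D ⧸ I := Ideal.Quotient.mk I with hπ
    rw [← Ideal.Quotient.eq_zero_iff_dvd]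
    set B' : Matrix (Fin n) (Fin n) (D ⧸ I) := B.map π with hB'
    set f' : Polynomial (D ⧸ I) := f.map π with hf'
    set Q' : Matrix (Fin n) (Fin n) (Polynomial (D ⧸ I))
      := Q.map (Polynomial.map π) with hQ'
    have hM : ∀ i j, ((f • (charmatrix B).adjugate) i j).map π
        = ((B.charpoly • Q) i j).map π := by
      intro i j
      have : (((f • (charmatrix B).adjugate) i j - (B.charpoly • Q) i j)).map π = 0 := by
        ext k
        rw [coeff_map, coeff_zero]
        exact (Ideal.Quotient.eq_zero_iff_dvd _ _).mpr (h i j k)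
      rwa [Polynomial.map_sub, sub_eq_zero] at this
    have hadj : (charmatrix B').adjugate = ((charmatrix B).adjugate).map (Polynomial.map π) := by
      rw [hB', charmatrix_map]
      have := (Polynomial.mapRingHom π).map_adjugate (charmatrix B)
      simpa [RingHom.mapMatrix_apply, Polynomial.coe_mapRingHom] using this.symm
    have hE : f' • (charmatrix B').adjugate = B'.charpoly • Q' := by
      ext i j : 1
      have h2 := hM i j
      rw [Matrix.smul_apply, Matrix.smul_apply, smul_eq_mul, smul_eq_mul,
        Polynomial.map_mul, Polynomial.map_mul] at h2
      rw [Matrix.smul_apply, Matrix.smul_apply, smul_eq_mul, smul_eq_mul, hadj,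
        Matrix.map_apply, hB', charpoly_map, hQ', Matrix.map_apply]
      exact h2
    have hmono : (B'.charpoly).Monic := charpoly_monic B'
    have key : f' • (1 : Matrix (Fin n) (Fin n) (Polynomial (D ⧸ I))) = Q' * charmatrix B' := by
      have h3 : (f' * B'.charpoly) • (1 : Matrix (Fin n) (Fin n) (Polynomial (D ⧸ I)))
          = B'.charpoly • (Q' * charmatrix B') := by
        calc (f' * B'.charpoly) • (1 : Matrix (Fin n) (Fin n) (Polynomial (D ⧸ I)))
            = f' • ((charmatrix B').adjugate * charmatrix B') := by
              rw [Matrix.adjugate_mul, ← smul_smul]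
              rfl
          _ = (f' • (charmatrix B').adjugate) * charmatrix B' := by rw [Matrix.smul_mul]
          _ = (B'.charpoly • Q') * charmatrix B' := by rw [hE]
          _ = B'.charpoly • (Q' * charmatrix B') := by rw [Matrix.smul_mul]
      ext i j : 1
      apply hmono.isRegular.left
      have h4 := congrArg (fun M : Matrix (Fin n) (Fin n) (Polynomial (D ⧸ I)) => M i j) h3
      simp only [Matrix.smul_apply, smul_eq_mul] at h4 ⊢
      rw [← h4]
      ring
    have h5 : f'.map (algebraMap (D ⧸ I) (Matrix (Fin n) (Fin n) (D ⧸ I)))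
        = matPolyEquiv Q' * (X - C B') := by
      calc f'.map (algebraMap (D ⧸ I) (Matrix (Fin n) (Fin n) (D ⧸ I)))
          = matPolyEquiv (f' • (1 : Matrix (Fin n) (Fin n) (Polynomial (D ⧸ I)))) :=
            (matPolyEquiv_smul_one _).symm
        _ = matPolyEquiv (Q' * charmatrix B') := by rw [key]
        _ = matPolyEquiv Q' * (X - C B') := by rw [_root_.map_mul, matPolyEquiv_charmatrix]
    have h6 : aeval B' f' = 0 := by
      have := congrArg (fun g => g.eval B') h5
      simpa only [eval_mul_X_sub_C, eval_map, ← aeval_def] using this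
    have hcomp : (π.mapMatrix).comp (algebraMap D (Matrix (Fin n) (Fin n) D))
        = (algebraMap (D ⧸ I) (Matrix (Fin n) (Fin n) (D ⧸ I))).comp π := by
      refine RingHom.ext fun d => ?_
      ext i j
      simp [Matrix.algebraMap_matrix_apply, RingHom.mapMatrix_apply, Matrix.map_apply,
        apply_ite π]
    have h7 : (π.mapMatrix) (aeval B f) = aeval B' f' := by
      rw [aeval_def, hom_eval₂, aeval_def, hf', eval₂_map, hcomp, RingHom.mapMatrix_apply]
    have h8 : π (aeval B f i j) = (aeval B' f') i j := by
      rw [← h7]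
      rfl
    rw [h8, h6]
    rfl
end

section
/- Let D be a principal ideal domain and B ∈ M_n(D) with minimal polynomial μ_B ∈ D[X] over the quotient field. Suppose p ∈ D is a prime element such that the reduction of μ_B modulo p is the minimal polynomial of the reduction of B modulo p. Then μ_B is a (p)-minimal polynomial of B, i.e., μ_B ∈ N_{(p)}(B) and every monic f ∈ N_{(p)}(B) has deg(f) ≥ deg(μ_B). -/
open Polynomial Matrix

theorem stmt12 (D : Type*) [CommRing D] [IsDomain D] [IsPrincipalIdealRing D]
    (n : ℕ) (hn : 0 < n) (B : Matrix (Fin n) (Fin n) D) (p : D) (hp : Prime p)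
    (μD : Polynomial D)
    (hμ : μD.map (algebraMap D (FractionRing D)) =
      minpoly (FractionRing D) (B.map (algebraMap D (FractionRing D))))
    (hbar : (μD.map (Ideal.Quotient.mk (Ideal.span {p}))).Monic ∧
      Polynomial.aeval (B.map (Ideal.Quotient.mk (Ideal.span {p})))
        (μD.map (Ideal.Quotient.mk (Ideal.span {p}))) = 0 ∧
      ∀ g : Polynomial (D ⧸ Ideal.span {p}), g.Monic →
        Polynomial.aeval (B.map (Ideal.Quotient.mk (Ideal.span {p}))) g = 0 →
        (μD.map (Ideal.Quotient.mk (Ideal.span {p}))).natDegree ≤ g.natDegree) :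
    (∀ i j, p ∣ Polynomial.aeval B μD i j) ∧
    ∀ f : Polynomial D, f.Monic → (∀ i j, p ∣ Polynomial.aeval B f i j) →
      μD.natDegree ≤ f.natDegree := by
  set I := Ideal.span {p} with hI
  have hmk : (Ideal.Quotient.mk I : D →+* D ⧸ I) = algebraMap D (D ⧸ I) :=
    (Ideal.Quotient.algebraMap_eq I).symm
  have key : ∀ f : Polynomial D,
      Polynomial.aeval (B.map (Ideal.Quotient.mk I)) (f.map (Ideal.Quotient.mk I)) =
      (Polynomial.aeval B f).map (Ideal.Quotient.mk I) := by
    intro f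
    rw [hmk, Polynomial.aeval_map_algebraMap]
    have : B.map (algebraMap D (D ⧸ I)) = (Ideal.Quotient.mkₐ D I).mapMatrix B := rfl
    rw [this, Polynomial.aeval_algHom_apply]
    rfl
  have hdvd : ∀ (f : Polynomial D), (∀ i j, p ∣ Polynomial.aeval B f i j) ↔
      Polynomial.aeval (B.map (Ideal.Quotient.mk I)) (f.map (Ideal.Quotient.mk I)) = 0 := by
    intro f
    rw [key]
    constructor
    · intro h
      ext i j
      simp only [Matrix.map_apply, Matrix.zero_apply]
      rw [Ideal.Quotient.eq_zero_iff_mem, hI, Ideal.mem_span_singleton]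
      exact h i j
    · intro h i j
      rw [← Ideal.mem_span_singleton, ← hI, ← Ideal.Quotient.eq_zero_iff_mem]
      have := congrFun (congrFun h i) j
      simpa [Matrix.map_apply] using this
  constructor
  · exact (hdvd μD).mpr hbar.2.1
  · intro f hf hfp
    have hμmonic : μD.Monic := by
      apply Polynomial.monic_of_injective
        (f := algebraMap D (FractionRing D))
        (IsFractionRing.injective D (FractionRing D))
      rw [hμ]
      exact minpoly.monic (Algebra.IsIntegral.isIntegral _)
    have hnt : Nontrivial (D ⧸ I) := by
      apply Ideal.Quotient.nontrivial_iff.mpr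
      rw [hI, Ne, Ideal.span_singleton_eq_top]
      exact hp.not_unit
    have h1 := hbar.2.2 (f.map (Ideal.Quotient.mk I)) (hf.map _) ((hdvd f).mp hfp)
    calc μD.natDegree = (μD.map (Ideal.Quotient.mk I)).natDegree :=
          (hμmonic.natDegree_map _).symm
      _ ≤ (f.map (Ideal.Quotient.mk I)).natDegree := h1
      _ = f.natDegree := hf.natDegree_map _
end

section
/- Let D be a principal ideal domain, B ∈ M_n(D), K its quotient field, and T ∈ M_n(D) ∩ GL_n(K) with T·B·T^{-1} = C the rational canonical form of B. For every prime element p of D not dividing det(T), the reduction of C modulo p is similar (over the field D/pD) to the reduction of B modulo p, and hence the reduction of μ_B modulo p is the minimal polynomial of B modulo p. -/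
open Polynomial Matrix

/-- The companion matrix of a (monic) polynomial `q` of degree `m = q.natDegree`:
ones on the subdiagonal and the negated coefficients of `q` in the last column. -/
def companion {D : Type*} [CommRing D] (q : Polynomial D) :
    Matrix (Fin q.natDegree) (Fin q.natDegree) D :=
  fun i j => if (j : ℕ) = q.natDegree - 1 then -q.coeff i
    else if (i : ℕ) = (j : ℕ) + 1 then 1 else 0

section Aux
variable {R S : Type*} [CommRing R] [CommRing S]

lemma aeval_matrix_map_s14 {m : Type*} [Fintype m] [DecidableEq m] (f : R →+* S)
    (M : Matrix m m R) (P : R[X]) :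
    (Polynomial.aeval M P).map f = Polynomial.aeval (M.map f) (P.map f) := by
  have h1 : (Polynomial.aeval M P).map f = f.mapMatrix (Polynomial.aeval M P) := rfl
  rw [h1, aeval_def, hom_eval₂, aeval_def, eval₂_map]
  congr 1
  ext r i j
  simp only [Matrix.algebraMap_eq_diagonal, RingHom.mapMatrix_apply, RingHom.coe_comp,
    Function.comp_apply, Matrix.map_apply]
  by_cases h : i = j <;> simp [Matrix.diagonal_apply, h]

lemma sum_mulVec {ι m n : Type*} [Fintype n] (s : Finset ι) (f : ι → Matrix m n R)
    (v : n → R) : (∑ k ∈ s, f k) *ᵥ v = ∑ k ∈ s, (f k) *ᵥ v := by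
  ext i
  simp only [Matrix.mulVec, dotProduct, Finset.sum_apply, Matrix.sum_apply,
    Finset.sum_mul]
  exact Finset.sum_comm

lemma subdiag_pow_mulVec {m : ℕ} (hm : 0 < m) (M : Matrix (Fin m) (Fin m) R)
    (hM : ∀ i j : Fin m, (j : ℕ) ≠ m - 1 → M i j = if (i : ℕ) = (j : ℕ) + 1 then (1:R) else 0) :
    ∀ (k : ℕ) (hk : k < m), (M ^ k) *ᵥ Pi.single (⟨0, hm⟩ : Fin m) (1:R) = Pi.single ⟨k, hk⟩ 1 := by
  intro k
  induction k with
  | zero => intro hk; rw [pow_zero, Matrix.one_mulVec]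
  | succ k ih =>
    intro hk
    have hk' : k < m := Nat.lt_of_succ_lt hk
    rw [pow_succ', ← Matrix.mulVec_mulVec, ih hk', Matrix.mulVec_single_one]
    funext i
    rw [Matrix.col_apply, hM i ⟨k, hk'⟩ (by simp; omega)]
    simp [Pi.single_apply, Fin.ext_iff]

lemma aeval_companion {q : R[X]} (hq : q.Monic) : Polynomial.aeval (companion q) q = 0 := by
  rcases Nat.eq_zero_or_pos q.natDegree with h0 | hm
  · ext i j
    exact absurd i.isLt (by omega)
  · set m := q.natDegree with hmdef
    set A := companion q with hA
    have hMshape : ∀ i j : Fin m, (j : ℕ) ≠ m - 1 →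
        A i j = if (i : ℕ) = (j : ℕ) + 1 then (1:R) else 0 := by
      intro i j hj
      simp [hA, companion, ← hmdef, hj]
    have hpow := subdiag_pow_mulVec hm A hMshape
    set e0 : Fin m → R := Pi.single ⟨0, hm⟩ 1 with he0
    have key : (Polynomial.aeval A q) *ᵥ e0 = 0 := by
      rw [aeval_eq_sum_range, _root_.sum_mulVec, Finset.sum_range_succ]
      simp only [Matrix.smul_mulVec]
      have hAm : (A ^ m) *ᵥ e0 = fun i : Fin m => -q.coeff (i:ℕ) := by
        rw [show A ^ m = A * A ^ (m-1) by rw [← pow_succ']; congr 1; omega,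
          ← Matrix.mulVec_mulVec, hpow (m-1) (by omega), Matrix.mulVec_single_one]
        funext i
        rw [Matrix.col_apply, hA]
        simp [companion, ← hmdef]
      rw [hAm]
      have hrest : ∀ (k : ℕ) (hk : k ∈ Finset.range m), q.coeff k • ((A ^ k) *ᵥ e0)
          = fun i : Fin m => if (i:ℕ) = k then q.coeff k else 0 := by
        intro k hk
        rw [hpow k (Finset.mem_range.mp hk)]
        funext i
        simp [Pi.single_apply, Fin.ext_iff, mul_ite]
      rw [Finset.sum_congr rfl hrest]
      funext i
      simp only [Finset.sum_apply, Pi.add_apply, Pi.smul_apply, Pi.zero_apply, smul_eq_mul]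
      rw [Finset.sum_ite_eq (Finset.range m) ((i:ℕ)) (fun k => q.coeff k)]
      simp [Finset.mem_range.mpr i.isLt, hq.coeff_natDegree, (show (i:ℕ) < m from i.isLt)]
    have hcomm : ∀ j : ℕ, (Polynomial.aeval A q) * A ^ j = A ^ j * Polynomial.aeval A q := by
      intro j
      have h1 : (Polynomial.aeval A q) * (Polynomial.aeval A ((X : R[X]) ^ j))
          = (Polynomial.aeval A ((X : R[X]) ^ j)) * (Polynomial.aeval A q) := by
        rw [← _root_.map_mul, ← _root_.map_mul, mul_comm]
      simpa [map_pow] using h1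
    have hz : ∀ j : Fin m, (Polynomial.aeval A q) *ᵥ (Pi.single j (1:R)) = 0 := by
      intro j
      have hj : (Pi.single j (1:R) : Fin m → R) = (A ^ (j:ℕ)) *ᵥ e0 := by
        rw [hpow (j:ℕ) j.isLt]
      rw [hj, Matrix.mulVec_mulVec, hcomm, ← Matrix.mulVec_mulVec, key, Matrix.mulVec_zero]
    ext i j
    have h2 := congrFun (hz j) i
    simp only [Matrix.mulVec_single_one, Matrix.col_apply, Pi.zero_apply] at h2
    simpa using h2


lemma le_natDegree_of_aeval_subdiag {m : ℕ} [Nontrivial S] (M : Matrix (Fin m) (Fin m) S)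
    (hM : ∀ i j : Fin m, (j : ℕ) ≠ m - 1 → M i j = if (i : ℕ) = (j : ℕ) + 1 then (1:S) else 0)
    {g : S[X]} (hg : g.Monic) (h0 : Polynomial.aeval M g = 0) : m ≤ g.natDegree := by
  by_contra hlt
  push_neg at hlt
  have hm : 0 < m := lt_of_le_of_lt (Nat.zero_le _) hlt
  have hpow := subdiag_pow_mulVec hm M hM
  set e0 : Fin m → S := Pi.single ⟨0, hm⟩ 1 with he0
  have key : (Polynomial.aeval M g) *ᵥ e0 = 0 := by rw [h0, Matrix.zero_mulVec]
  rw [aeval_eq_sum_range, _root_.sum_mulVec] at key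
  simp only [Matrix.smul_mulVec] at key
  have hrest : ∀ (k : ℕ) (hk : k ∈ Finset.range (g.natDegree + 1)), g.coeff k • ((M ^ k) *ᵥ e0)
      = fun i : Fin m => if (i:ℕ) = k then g.coeff k else 0 := by
    intro k hk
    rw [hpow k (lt_of_lt_of_le (Finset.mem_range.mp hk) hlt)]
    funext i
    simp [Pi.single_apply, Fin.ext_iff, mul_ite]
  rw [Finset.sum_congr rfl hrest] at key
  have h2 := congrFun key ⟨g.natDegree, hlt⟩
  simp only [Finset.sum_apply, Pi.zero_apply] at h2
  rw [Finset.sum_ite_eq (Finset.range (g.natDegree + 1)) ((g.natDegree : ℕ))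
    (fun k => g.coeff k)] at h2
  simp [Finset.mem_range, hg.coeff_natDegree] at h2

lemma intertwine_aeval {A : Type*} [Ring A] [Algebra R A] {T B C : A} (h : T * B = C * T)
    (P : R[X]) : T * Polynomial.aeval B P = Polynomial.aeval C P * T := by
  have hk : ∀ k : ℕ, T * B ^ k = C ^ k * T := by
    intro k
    induction k with
    | zero => simp
    | succ k ih =>
      rw [pow_succ', ← mul_assoc, h, mul_assoc, ih, ← mul_assoc, ← pow_succ']
  rw [aeval_eq_sum_range, aeval_eq_sum_range, Finset.mul_sum, Finset.sum_mul]
  exact Finset.sum_congr rfl fun k _ => by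
    rw [mul_smul_comm, hk k, smul_mul_assoc]

lemma aeval_blockDiagonal' {ι : Type*} [Fintype ι] [DecidableEq ι] {mι : ι → Type*}
    [∀ i, Fintype (mι i)] [∀ i, DecidableEq (mι i)]
    (M : ∀ i, Matrix (mι i) (mι i) R) (P : R[X]) :
    Polynomial.aeval (Matrix.blockDiagonal' M) P
      = Matrix.blockDiagonal' (fun i => Polynomial.aeval (M i) P) := by
  let F : (∀ i, Matrix (mι i) (mι i) R) →ₐ[R] Matrix (Σ i, mι i) (Σ i, mι i) R :=
    AlgHom.mk' (Matrix.blockDiagonal'RingHom mι R) (fun c N => Matrix.blockDiagonal'_smul c N)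
  have h1 : Polynomial.aeval (F M) P = F (Polynomial.aeval M P) := aeval_algHom_apply F M P
  have h2 : ∀ i, (Polynomial.aeval M P) i = Polynomial.aeval (M i) P := by
    intro i
    exact (aeval_algHom_apply (Pi.evalAlgHom R (fun i => Matrix (mι i) (mι i) R) i) M P).symm
  have hFM : F M = Matrix.blockDiagonal' M := rfl
  rw [← hFM, h1]
  show Matrix.blockDiagonal' (Polynomial.aeval M P) = _
  exact congrArg Matrix.blockDiagonal' (funext h2)

end Aux

theorem stmt14 (D : Type*) [CommRing D] [IsDomain D] [IsPrincipalIdealRing D]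
    (n : ℕ) (hn : 0 < n) (B T C : Matrix (Fin n) (Fin n) D)
    (r : ℕ) (μ : Fin r → Polynomial D)
    (e : (Σ i : Fin r, Fin (μ i).natDegree) ≃ Fin n)
    (hmonic : ∀ i, (μ i).Monic) (hdegpos : ∀ i, 0 < (μ i).natDegree)
    (hchain : ∀ i j : Fin r, i ≤ j → μ i ∣ μ j)
    (hprod : (∏ i, μ i) = B.charpoly)
    (hC : C = Matrix.reindex e e (Matrix.blockDiagonal' (fun i => companion (μ i))))
    (hdet : T.det ≠ 0) (hsim : T * B = C * T)
    (μD : Polynomial D)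
    (hμ : μD.map (algebraMap D (FractionRing D)) =
      minpoly (FractionRing D) (B.map (algebraMap D (FractionRing D))))
    (p : D) (hp : Prime p) (hpdet : ¬ p ∣ T.det) :
    (∃ U : Matrix (Fin n) (Fin n) (D ⧸ Ideal.span {p}), IsUnit U.det ∧
        U * B.map (Ideal.Quotient.mk (Ideal.span {p})) =
          C.map (Ideal.Quotient.mk (Ideal.span {p})) * U) ∧
    ((μD.map (Ideal.Quotient.mk (Ideal.span {p}))).Monic ∧
      Polynomial.aeval (B.map (Ideal.Quotient.mk (Ideal.span {p})))
        (μD.map (Ideal.Quotient.mk (Ideal.span {p}))) = 0 ∧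
      ∀ g : Polynomial (D ⧸ Ideal.span {p}), g.Monic →
        Polynomial.aeval (B.map (Ideal.Quotient.mk (Ideal.span {p}))) g = 0 →
        (μD.map (Ideal.Quotient.mk (Ideal.span {p}))).natDegree ≤ g.natDegree) := by
  haveI hmax : (Ideal.span {p}).IsMaximal :=
    PrincipalIdealRing.isMaximal_of_irreducible hp.irreducible
  letI : Field (D ⧸ Ideal.span {p}) := Ideal.Quotient.field (Ideal.span {p})
  have hUdet : IsUnit ((T.map (Ideal.Quotient.mk (Ideal.span {p}))).det) := by
    rw [← RingHom.mapMatrix_apply, ← RingHom.map_det, isUnit_iff_ne_zero, Ne, Ideal.Quotient.eq_zero_iff_mem,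
      Ideal.mem_span_singleton]
    exact hpdet
  have hsim' : (T.map (Ideal.Quotient.mk (Ideal.span {p})))
        * (B.map (Ideal.Quotient.mk (Ideal.span {p})))
      = (C.map (Ideal.Quotient.mk (Ideal.span {p})))
        * (T.map (Ideal.Quotient.mk (Ideal.span {p}))) := by
    rw [← Matrix.map_mul, ← Matrix.map_mul, hsim]
  have hKinj : Function.Injective (algebraMap D (FractionRing D)) :=
    IsFractionRing.injective D (FractionRing D)
  have hμmonic : μD.Monic := by
    apply Polynomial.monic_of_injective hKinj
    rw [hμ]
    exact minpoly.monic (Algebra.IsIntegral.isIntegral _)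
  have hBμD : Polynomial.aeval B μD = 0 := by
    have h1 : (Polynomial.aeval B μD).map (algebraMap D (FractionRing D)) = 0 := by
      rw [aeval_matrix_map_s14, hμ]
      exact minpoly.aeval _ _
    ext i j
    apply hKinj
    have h2 := congrFun (congrFun h1 i) j
    simpa using h2
  have haev : Polynomial.aeval (B.map (Ideal.Quotient.mk (Ideal.span {p})))
      (μD.map (Ideal.Quotient.mk (Ideal.span {p}))) = 0 := by
    rw [← aeval_matrix_map_s14, hBμD]
    ext i j
    simp
  have hr : 0 < r := (e.symm ⟨0, hn⟩).1.pos
  set i₀ : Fin r := ⟨r - 1, by omega⟩ with hi₀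
  have hle : ∀ i : Fin r, i ≤ i₀ := by
    intro i
    rw [Fin.le_def]
    have := i.isLt
    simp only [hi₀]
    omega
  have hCμ : Polynomial.aeval C (μ i₀) = 0 := by
    rw [hC]
    have h1 : (Matrix.reindex e e (Matrix.blockDiagonal' fun i => companion (μ i)))
        = (Matrix.reindexAlgEquiv D D e) (Matrix.blockDiagonal' fun i => companion (μ i)) := rfl
    rw [h1, aeval_algHom_apply, aeval_blockDiagonal']
    have hz : (fun i => Polynomial.aeval (companion (μ i)) (μ i₀))
        = (0 : ∀ i : Fin r, Matrix (Fin (μ i).natDegree) (Fin (μ i).natDegree) D) := by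
      funext i
      obtain ⟨h, hh⟩ := hchain i i₀ (hle i)
      rw [Pi.zero_apply, hh, _root_.map_mul, aeval_companion (hmonic i), zero_mul]
    rw [hz, Matrix.blockDiagonal'_zero, _root_.map_zero]
  have hBμ0 : Polynomial.aeval B (μ i₀) = 0 := by
    have h1 : T * Polynomial.aeval B (μ i₀) = 0 := by
      rw [intertwine_aeval hsim, hCμ, zero_mul]
    have h2 : T.det • Polynomial.aeval B (μ i₀) = 0 := by
      calc T.det • Polynomial.aeval B (μ i₀)
          = (T.det • (1 : Matrix (Fin n) (Fin n) D)) * Polynomial.aeval B (μ i₀) := by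
            rw [Matrix.smul_mul, one_mul]
        _ = (T.adjugate * T) * Polynomial.aeval B (μ i₀) := by rw [Matrix.adjugate_mul]
        _ = T.adjugate * (T * Polynomial.aeval B (μ i₀)) := by rw [mul_assoc]
        _ = 0 := by rw [h1, mul_zero]
    ext i j
    have h3 := congrFun (congrFun h2 i) j
    simp only [Matrix.smul_apply, smul_eq_mul, Matrix.zero_apply] at h3
    rcases mul_eq_zero.mp h3 with h | h
    · exact absurd h hdet
    · simpa using h
  have hdegle : μD.natDegree ≤ (μ i₀).natDegree := by
    have hK0 : Polynomial.aeval (B.map (algebraMap D (FractionRing D)))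
        ((μ i₀).map (algebraMap D (FractionRing D))) = 0 := by
      rw [← aeval_matrix_map_s14, hBμ0]
      ext i j
      simp
    have hdvd : μD.map (algebraMap D (FractionRing D))
        ∣ (μ i₀).map (algebraMap D (FractionRing D)) := by
      rw [hμ]
      exact minpoly.dvd _ _ hK0
    have hne : (μ i₀).map (algebraMap D (FractionRing D)) ≠ 0 := ((hmonic i₀).map _).ne_zero
    have h4 := Polynomial.natDegree_le_of_dvd hdvd hne
    rwa [hμmonic.natDegree_map, (hmonic i₀).natDegree_map] at h4
  refine ⟨⟨T.map (Ideal.Quotient.mk (Ideal.span {p})), hUdet, hsim'⟩,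
    hμmonic.map _, haev, ?_⟩
  intro g hg hg0
  have hCg : Polynomial.aeval (C.map (Ideal.Quotient.mk (Ideal.span {p}))) g = 0 := by
    have h1 : Polynomial.aeval (C.map (Ideal.Quotient.mk (Ideal.span {p}))) g
        * (T.map (Ideal.Quotient.mk (Ideal.span {p}))) = 0 := by
      rw [← intertwine_aeval hsim', hg0, mul_zero]
    have h2 := congrArg (fun M => M * (T.map (Ideal.Quotient.mk (Ideal.span {p})))⁻¹) h1
    simpa [mul_assoc, Matrix.mul_nonsing_inv _ hUdet] using h2
  have hcommap : ∀ (N : Matrix ((Σ i : Fin r, Fin (μ i).natDegree))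
      ((Σ i : Fin r, Fin (μ i).natDegree)) D),
      (Matrix.reindex e e N).map (Ideal.Quotient.mk (Ideal.span {p}))
        = Matrix.reindex e e (N.map (Ideal.Quotient.mk (Ideal.span {p}))) := fun N => rfl
  have hCmap : C.map (Ideal.Quotient.mk (Ideal.span {p}))
      = (Matrix.reindexAlgEquiv (D ⧸ Ideal.span {p}) (D ⧸ Ideal.span {p}) e)
        (Matrix.blockDiagonal'
          fun i => (companion (μ i)).map (Ideal.Quotient.mk (Ideal.span {p}))) := by
    rw [hC, hcommap, Matrix.blockDiagonal'_map _ _ (map_zero _), Matrix.reindexAlgEquiv_apply]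
  rw [hCmap, aeval_algHom_apply, aeval_blockDiagonal'] at hCg
  have hblocks : (Matrix.blockDiagonal' fun i => Polynomial.aeval
      ((companion (μ i)).map (Ideal.Quotient.mk (Ideal.span {p}))) g) = 0 := by
    apply (Matrix.reindexAlgEquiv (D ⧸ Ideal.span {p}) (D ⧸ Ideal.span {p}) e).injective
    rw [hCg, _root_.map_zero]
  have hblock : Polynomial.aeval
      ((companion (μ i₀)).map (Ideal.Quotient.mk (Ideal.span {p}))) g = 0 := by
    ext a b
    have h5 := congrFun (congrFun hblocks ⟨i₀, a⟩) ⟨i₀, b⟩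
    rw [Matrix.blockDiagonal'_apply_eq] at h5
    simpa using h5
  have hshape : ∀ i j : Fin (μ i₀).natDegree, (j : ℕ) ≠ (μ i₀).natDegree - 1 →
      ((companion (μ i₀)).map (Ideal.Quotient.mk (Ideal.span {p}))) i j
        = if (i : ℕ) = (j : ℕ) + 1 then 1 else 0 := by
    intro i j hj
    simp [Matrix.map_apply, companion, hj, apply_ite]
  have hfin := le_natDegree_of_aeval_subdiag _ hshape hg hblock
  calc (μD.map (Ideal.Quotient.mk (Ideal.span {p}))).natDegree
      = μD.natDegree := hμmonic.natDegree_map _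
    _ ≤ (μ i₀).natDegree := hdegle
    _ ≤ g.natDegree := hfin
end

section
/- Let D be a principal ideal domain and B ∈ M_n(D) with minimal polynomial μ_B ∈ D[X]. Then for all but finitely many prime elements p ∈ D (up to associates) and all t ≥ 1, N_{(p^t)}(B) = μ_B·D[X] + p^t·D[X]. -/
open Polynomial Matrix

lemma lemA {D : Type*} [CommRing D] [IsDomain D] [IsPrincipalIdealRing D]
    {M : Type*} [AddCommGroup M] [Module D M] [Module.Free D M] [Module.Finite D M]
    {m : ℕ} (φ : (Fin m → D) →ₗ[D] M) (hφ : Function.Injective φ) :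
    ∃ d : D, d ≠ 0 ∧ ∀ p : D, Prime p → ¬ p ∣ d → ∀ (t : ℕ) (x : Fin m → D) (z : M),
      φ x = p ^ t • z → ∀ i, p ^ t ∣ x i := by
  classical
  let b := Module.Free.chooseBasis D M
  obtain ⟨n₀, snf⟩ := (LinearMap.range φ).smithNormalForm b
  have ha : ∀ i, snf.a i ≠ 0 := by
    intro i hai
    apply snf.bN.ne_zero i
    have := snf.snf i
    rw [hai, zero_smul] at this
    exact Subtype.ext this
  refine ⟨∏ i, snf.a i, Finset.prod_ne_zero_iff.mpr fun i _ => ha i, ?_⟩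
  intro p hp hpd t x z hxz
  have hpa : ∀ i, ¬ p ∣ snf.a i := fun i hdvd =>
    hpd (hdvd.trans (Finset.dvd_prod_of_mem _ (Finset.mem_univ i)))
  set y : LinearMap.range φ := ⟨φ x, LinearMap.mem_range_self _ _⟩ with hy
  have hc : ∀ i, p ^ t ∣ snf.bN.repr y i := by
    intro i
    have h1 := snf.repr_apply_embedding_eq_repr_smul (m := y) (i := i)
    have h2 : snf.bM.repr (y : M) (snf.f i) = p ^ t * snf.bM.repr z (snf.f i) := by
      show snf.bM.repr (φ x) (snf.f i) = _
      rw [hxz, _root_.map_smul]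
      simp [smul_eq_mul]
    have h3 : snf.bN.repr (snf.a i • y) i = snf.a i * snf.bN.repr y i := by
      rw [_root_.map_smul]; simp [smul_eq_mul]
    rw [h2, h3] at h1
    exact hp.pow_dvd_of_dvd_mul_left _ (hpa i) ⟨_, h1.symm⟩
  choose u hu using hc
  have hyw : y = p ^ t • ∑ i, u i • snf.bN i := by
    rw [Finset.smul_sum]
    conv_lhs => rw [← snf.bN.sum_repr y]
    refine Finset.sum_congr rfl fun i _ => ?_
    rw [hu i, mul_smul]
  obtain ⟨v, hv⟩ := (∑ i, u i • snf.bN i : LinearMap.range φ).2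
  have : φ x = φ (p ^ t • v) := by
    rw [_root_.map_smul, hv]
    calc φ x = (y : M) := rfl
    _ = ((p ^ t • ∑ i, u i • snf.bN i : LinearMap.range φ) : M) := by rw [← hyw]
    _ = p ^ t • ((∑ i, u i • snf.bN i : LinearMap.range φ) : M) := rfl
  have hx := hφ this
  intro i
  rw [hx]
  exact ⟨v i, rfl⟩
theorem stmt15 (D : Type*) [CommRing D] [IsDomain D] [IsPrincipalIdealRing D]
    (n : ℕ) (hn : 0 < n) (B : Matrix (Fin n) (Fin n) D)
    (μD : Polynomial D)
    (hμ : μD.map (algebraMap D (FractionRing D)) =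
      minpoly (FractionRing D) (B.map (algebraMap D (FractionRing D)))) :
    ∃ S : Finset D, ∀ p : D, Prime p → (∀ q ∈ S, ¬ Associated p q) →
      ∀ t : ℕ, 1 ≤ t → ∀ f : Polynomial D,
        (∀ i j, p ^ t ∣ Polynomial.aeval B f i j) ↔
          ∃ g h : Polynomial D, f = g * μD + Polynomial.C (p ^ t) * h := by
  classical
  set K := FractionRing D with hK
  have hAinj : Function.Injective (algebraMap D K) := IsFractionRing.injective D K
  haveI : Nonempty (Fin n) := ⟨⟨0, hn⟩⟩
  set B' := B.map (algebraMap D K) with hB'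
  set Ψ : Matrix (Fin n) (Fin n) D →ₐ[D] Matrix (Fin n) (Fin n) K :=
    (Algebra.ofId D K).mapMatrix with hΨ
  have hΨB : Ψ B = B' := rfl
  have hΨinj : Function.Injective Ψ := by
    intro X Y h
    ext i j
    exact hAinj (congrFun (congrFun (congrArg Matrix.of h) i) j)
  have hint : IsIntegral K B' := IsIntegral.of_finite K B'
  have hmonic : μD.Monic :=
    Polynomial.monic_of_injective hAinj (by rw [hμ]; exact minpoly.monic hint)
  set m := μD.natDegree with hmdef
  have hmm : (minpoly K B').natDegree = m := by
    rw [← hμ, Polynomial.natDegree_map_eq_of_injective hAinj]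
  have hm1 : 0 < m := hmm ▸ minpoly.natDegree_pos hint
  have hkey : ∀ q : Polynomial D,
      Ψ (Polynomial.aeval B q) = Polynomial.aeval B' (q.map (algebraMap D K)) := by
    intro q
    rw [Polynomial.aeval_map_algebraMap, ← Polynomial.aeval_algHom_apply, hΨB]
  have hμB : Polynomial.aeval B μD = 0 := by
    apply hΨinj
    rw [hkey, hμ, minpoly.aeval, map_zero]
  set φ : (Fin m → D) →ₗ[D] Matrix (Fin n) (Fin n) D :=
    Fintype.linearCombination D (fun k : Fin m => B ^ (k : ℕ)) with hφdef
  have haqφ : ∀ v : Fin m → D,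
      Polynomial.aeval B (∑ k : Fin m, Polynomial.C (v k) * Polynomial.X ^ (k : ℕ)) = φ v := by
    intro v
    rw [hφdef, Fintype.linearCombination_apply, map_sum]
    refine Finset.sum_congr rfl fun k _ => ?_
    rw [_root_.map_mul, Polynomial.aeval_C, map_pow, Polynomial.aeval_X, Algebra.smul_def]
  have hφinj : Function.Injective φ := by
    rw [← LinearMap.ker_eq_bot]
    rw [LinearMap.ker_eq_bot']
    intro v hv
    set q : Polynomial D := ∑ k : Fin m, Polynomial.C (v k) * Polynomial.X ^ (k : ℕ) with hqdef
    have hq0 : q.map (algebraMap D K) = 0 := by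
      by_contra hne
      have hdeg : (q.map (algebraMap D K)).degree < (m : ℕ) := by
        rw [hqdef, Polynomial.map_sum]
        simp only [Polynomial.map_mul, Polynomial.map_C, Polynomial.map_pow, Polynomial.map_X]
        exact Polynomial.degree_sum_fin_lt _
      have haev : Polynomial.aeval B' (q.map (algebraMap D K)) = 0 := by
        rw [← hkey, haqφ, hv, map_zero]
      have hle : ((minpoly K B').natDegree : WithBot ℕ) ≤ (q.map (algebraMap D K)).degree := by
        rw [← Polynomial.degree_eq_natDegree (minpoly.ne_zero hint)]
        exact minpoly.degree_le_of_ne_zero K B' hne haev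
      rw [hmm] at hle
      exact absurd (lt_of_le_of_lt hle hdeg) (lt_irrefl _)
    have hq : q = 0 := by
      apply Polynomial.map_injective _ hAinj
      rw [hq0, Polynomial.map_zero]
    funext k
    have hcoeff := congrArg (fun r => Polynomial.coeff r (k : ℕ)) hq
    simp only [hqdef, Polynomial.finset_sum_coeff, Polynomial.coeff_C_mul,
      Polynomial.coeff_X_pow, Polynomial.coeff_zero, mul_ite, mul_one, mul_zero,
      Fin.val_inj, Finset.sum_ite_eq, Finset.mem_univ, if_true] at hcoeff
    exact hcoeff
  obtain ⟨d, hd0, hdP⟩ := lemA φ hφinj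
  refine ⟨(UniqueFactorizationMonoid.factors d).toFinset, ?_⟩
  intro p hp hpS t ht f
  have hpd : ¬ p ∣ d := by
    intro hdvd
    obtain ⟨q, hq, hassoc⟩ :=
      UniqueFactorizationMonoid.exists_mem_factors_of_dvd hd0 hp.irreducible hdvd
    exact hpS q (Multiset.mem_toFinset.mpr hq) hassoc
  constructor
  · intro hent
    set r := f %ₘ μD with hrdef
    have hBr : Polynomial.aeval B r = Polynomial.aeval B f := by
      conv_rhs => rw [← Polynomial.modByMonic_add_div f μD]
      rw [map_add, _root_.map_mul, hμB, zero_mul, add_zero]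
    by_cases hr0 : r = 0
    · refine ⟨f /ₘ μD, 0, ?_⟩
      rw [mul_zero, add_zero, mul_comm]
      conv_lhs => rw [← Polynomial.modByMonic_add_div f μD]
      rw [← hrdef, hr0, zero_add]
    · have hdegr : r.natDegree < m :=
        Polynomial.natDegree_lt_natDegree hr0 (Polynomial.degree_modByMonic_lt f hmonic)
      have hz : ∀ i j, ∃ c, Polynomial.aeval B r i j = p ^ t * c := by
        intro i j
        obtain ⟨c, hc⟩ := hent i j
        exact ⟨c, by rw [hBr]; exact hc⟩
      choose z hzs using hz
      have hφx : φ (fun k : Fin m => r.coeff (k : ℕ)) =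
          p ^ t • (Matrix.of z) := by
        rw [hφdef, Fintype.linearCombination_apply]
        have hsum : Polynomial.aeval B r = ∑ k : Fin m, r.coeff (k : ℕ) • B ^ (k : ℕ) := by
          rw [Polynomial.aeval_eq_sum_range' hdegr, ← Fin.sum_univ_eq_sum_range]
        rw [← hsum]
        ext i j
        rw [Matrix.smul_apply, smul_eq_mul]
        exact hzs i j
      have hcoef : ∀ i : ℕ, p ^ t ∣ r.coeff i := by
        intro i
        by_cases hi : i < m
        · exact hdP p hp hpd t _ _ hφx ⟨i, hi⟩
        · rw [Polynomial.coeff_eq_zero_of_natDegree_lt (lt_of_lt_of_le hdegr (le_of_not_gt hi))]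
          exact dvd_zero _
      obtain ⟨h, hh⟩ := (Polynomial.C_dvd_iff_dvd_coeff _ _).mpr hcoef
      refine ⟨f /ₘ μD, h, ?_⟩
      conv_lhs => rw [← Polynomial.modByMonic_add_div f μD]
      rw [← hrdef, hh, mul_comm μD, add_comm]
  · rintro ⟨g, h, rfl⟩ i j
    rw [map_add, _root_.map_mul, hμB, mul_zero, zero_add, _root_.map_mul, Polynomial.aeval_C,
      ← Algebra.smul_def]
    rw [Matrix.smul_apply, smul_eq_mul]
    exact ⟨_, rfl⟩
end

section
/- Let D be a principal ideal domain, B ∈ M_n(D), and a = b·c with b, c ∈ D coprime nonzero elements. Then N_{(a)}(B) = c·N_{(b)}(B) + b·N_{(c)}(B). -/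
open Polynomial Matrix

theorem stmt16 (D : Type*) [CommRing D] [IsDomain D] [IsPrincipalIdealRing D]
    (n : ℕ) (B : Matrix (Fin n) (Fin n) D) (b c : D)
    (hb : b ≠ 0) (hc : c ≠ 0) (hbc : IsCoprime b c) (f : Polynomial D) :
    (∀ i j, b * c ∣ Polynomial.aeval B f i j) ↔
      ∃ g h : Polynomial D, (∀ i j, b ∣ Polynomial.aeval B g i j) ∧
        (∀ i j, c ∣ Polynomial.aeval B h i j) ∧
        f = Polynomial.C c * g + Polynomial.C b * h := by
  constructor
  · intro hf
    obtain ⟨u, v, huv⟩ := hbc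
    refine ⟨C v * f, C u * f, ?_, ?_, ?_⟩
    · intro i j
      obtain ⟨k, hk⟩ := hf i j
      simp only [_root_.map_mul, aeval_C, ← Algebra.smul_def, Matrix.smul_apply, smul_eq_mul]
      exact ⟨v * c * k, by rw [hk]; ring⟩
    · intro i j
      obtain ⟨k, hk⟩ := hf i j
      simp only [_root_.map_mul, aeval_C, ← Algebra.smul_def, Matrix.smul_apply, smul_eq_mul]
      exact ⟨u * b * k, by rw [hk]; ring⟩
    · have h1 : c * v + b * u = 1 := by linear_combination huv
      calc f = C (c * v + b * u) * f := by rw [h1, C_1, one_mul]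
        _ = C c * (C v * f) + C b * (C u * f) := by rw [C_add, C_mul, C_mul]; ring
  · rintro ⟨g, h, hg, hh, rfl⟩ i j
    obtain ⟨k, hk⟩ := hg i j
    obtain ⟨l, hl⟩ := hh i j
    simp only [map_add, _root_.map_mul, aeval_C, ← Algebra.smul_def, Matrix.add_apply,
      Matrix.smul_apply, smul_eq_mul]
    exact ⟨k + l, by rw [hk, hl]; ring⟩
end

section
/- Let D be a principal ideal domain, p prime, B ∈ M_n(D). Suppose for some t ≥ 1 there is a (p^t)-minimal polynomial ν_t with deg(ν_t) = deg(μ_B), where μ_B is the minimal polynomial of B over the quotient field. Then for all s ≥ t, μ_B is a (p^s)-minimal polynomial of B: indeed μ_B ∈ N_{(p^s)}(B) ⊇ μ_B·D[X] and every monic f ∈ N_{(p^s)}(B) has deg(f) ≥ deg(μ_B). -/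
open Polynomial Matrix

theorem stmt17 (D : Type*) [CommRing D] [IsDomain D] [IsPrincipalIdealRing D]
    (n : ℕ) (hn : 0 < n) (B : Matrix (Fin n) (Fin n) D) (p : D) (hp : Prime p)
    (μD : Polynomial D)
    (hμ : μD.map (algebraMap D (FractionRing D)) =
      minpoly (FractionRing D) (B.map (algebraMap D (FractionRing D))))
    (t : ℕ) (ht : 1 ≤ t) (νt : Polynomial D)
    (hνt : νt.Monic ∧ (∀ i j, p ^ t ∣ Polynomial.aeval B νt i j) ∧
      ∀ g : Polynomial D, g.Monic → (∀ i j, p ^ t ∣ Polynomial.aeval B g i j) →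
        νt.natDegree ≤ g.natDegree)
    (hdeg : νt.natDegree = μD.natDegree) :
    ∀ s : ℕ, t ≤ s →
      (∀ i j, p ^ s ∣ Polynomial.aeval B μD i j) ∧
      ∀ f : Polynomial D, f.Monic → (∀ i j, p ^ s ∣ Polynomial.aeval B f i j) →
        μD.natDegree ≤ f.natDegree := by
  intro s hs
  have hzero : Polynomial.aeval B μD = 0 := by
    set φ := algebraMap D (FractionRing D)
    have hinj : Function.Injective φ := IsFractionRing.injective D (FractionRing D)
    have key : (Polynomial.aeval B μD).map φ =
        Polynomial.aeval (B.map φ) (μD.map φ) := by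
      show φ.mapMatrix (Polynomial.aeval B μD) = _
      rw [Polynomial.aeval_def, Polynomial.aeval_def, Polynomial.hom_eval₂,
        Polynomial.eval₂_map]
      congr 1
      ext d i j
      simp [Matrix.algebraMap_matrix_apply, apply_ite φ]
    have : (Polynomial.aeval B μD).map φ = 0 := by
      rw [key, hμ, minpoly.aeval]
    ext i j
    have := congrFun (congrFun this i) j
    simpa [Matrix.map_apply, map_eq_zero_iff φ hinj] using this
  constructor
  · intro i j
    simp [hzero]
  · intro f hf hfd
    calc μD.natDegree = νt.natDegree := hdeg.symm
      _ ≤ f.natDegree := hνt.2.2 f hf fun i j =>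
          dvd_trans (pow_dvd_pow p hs) (hfd i j)
end
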